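/- arXiv:1505.00250 — 7 statements merged into one kernel-verified Lean document; each statement's English description precedes it below -/
import Mathlib

section
/- For every integer t ≥ 1, the following identity holds in the ring of formal power series ℤ⟦X⟧: (∑_{n≥1} p(n,t)·Xⁿ) · (1 − X^t) · ∏_{i=1}^{t} (1 − X^i) = 1 − ∏_{i=1}^{t} (1 − X^i). -/
open PowerSeries Finset

noncomputable def boundedDiffCount (n t : ℕ) : ℕ :=
  Nat.card { P : n.Partition // P.parts ≠ 0 ∧ ∀ a ∈ P.parts, ∀ b ∈ P.parts, a ≤ b + t }

noncomputable def bddCount (t n : ℕ) : ℕ :=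
  Nat.card { P : n.Partition // ∀ a ∈ P.parts, a ≤ t }

lemma mem_le_sum {s : Multiset ℕ} {a : ℕ} (h : a ∈ s) : a ≤ s.sum := by
  rw [← Multiset.cons_erase h, Multiset.sum_cons]; exact Nat.le_add_right _ _

lemma msup_mem {s : Multiset ℕ} (hs : s ≠ 0) : s.sup ∈ s := by
  induction s using Multiset.induction with
  | empty => simp at hs
  | cons a s ih =>
    rcases eq_or_ne s 0 with rfl | h
    · simp
    · rw [Multiset.sup_cons]
      rcases le_total a s.sup with h1 | h1
      · rw [sup_eq_right.2 h1]; exact Multiset.mem_cons_of_mem (ih h)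
      · rw [sup_eq_left.2 h1]; exact Multiset.mem_cons_self a s

lemma card_split {α : Type*} [Finite α] (p q : α → Prop) :
    Nat.card {x // p x} = Nat.card {x // p x ∧ q x} + Nat.card {x // p x ∧ ¬ q x} := by
  classical
  rw [← Nat.card_congr (Equiv.subtypeSubtypeEquivSubtypeInter p q),
      ← Nat.card_congr (Equiv.subtypeSubtypeEquivSubtypeInter p fun x => ¬ q x),
      ← Nat.card_sum, ← Nat.card_congr (Equiv.sumCompl fun y : {x // p x} => q y.1)]

lemma parts_eq_zero (P : Nat.Partition 0) : P.parts = 0 := by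
  rw [Multiset.eq_zero_iff_forall_notMem]
  intro a ha
  have h1 := P.parts_pos ha
  have h2 := mem_le_sum ha
  rw [P.parts_sum] at h2
  omega

lemma bddCount_zero_right (t : ℕ) : bddCount t 0 = 1 := by
  rw [bddCount, Nat.card_eq_one_iff_unique]
  constructor
  · exact ⟨fun a b => Subtype.ext (by ext1; rw [parts_eq_zero, parts_eq_zero])⟩
  · exact ⟨⟨default, by intro a ha; rw [parts_eq_zero] at ha; simp at ha⟩⟩

lemma boundedDiffCount_zero (t : ℕ) : boundedDiffCount 0 t = 0 := by
  rw [boundedDiffCount]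
  have : IsEmpty { P : Nat.Partition 0 // P.parts ≠ 0 ∧
      ∀ a ∈ P.parts, ∀ b ∈ P.parts, a ≤ b + t } :=
    ⟨fun x => x.2.1 (parts_eq_zero x.1)⟩
  exact Nat.card_of_isEmpty

lemma bddCount_zero_left {n : ℕ} (hn : 1 ≤ n) : bddCount 0 n = 0 := by
  rw [bddCount]
  have : IsEmpty { P : n.Partition // ∀ a ∈ P.parts, a ≤ 0 } := by
    refine ⟨fun x => ?_⟩
    have h0 : x.1.parts = 0 := by
      rw [Multiset.eq_zero_iff_forall_notMem]
      intro a ha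
      have := x.1.parts_pos ha
      have := x.2 a ha
      omega
    have := x.1.parts_sum
    rw [h0] at this
    simp at this
    omega
  exact Nat.card_of_isEmpty

/-- Erasing one part equal to `t`. -/
def erasePartition {n t : ℕ} (P : n.Partition) (h : t ∈ P.parts) : (n - t).Partition where
  parts := P.parts.erase t
  parts_pos := fun hi => P.parts_pos (Multiset.mem_of_mem_erase hi)
  parts_sum := by
    have h1 : t + (P.parts.erase t).sum = n := by
      rw [← Multiset.sum_cons, Multiset.cons_erase h, P.parts_sum]
    omega

/-- Adding a part `t`. -/
def consPartition {n t : ℕ} (ht : 1 ≤ t) (htn : t ≤ n) (Q : (n - t).Partition) :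
    n.Partition where
  parts := t ::ₘ Q.parts
  parts_pos := by
    intro i hi
    rcases Multiset.mem_cons.1 hi with rfl | hi
    · omega
    · exact Q.parts_pos hi
  parts_sum := by rw [Multiset.sum_cons, Q.parts_sum]; omega

lemma bddCount_rec {t n : ℕ} (ht : 1 ≤ t) (htn : t ≤ n) :
    bddCount t n = bddCount (t - 1) n + bddCount t (n - t) := by
  classical
  have h1 : Nat.card { P : n.Partition // (∀ a ∈ P.parts, a ≤ t) ∧ t ∈ P.parts }
      = bddCount t (n - t) := by
    rw [bddCount]
    refine Nat.card_congr ⟨fun x => ⟨erasePartition x.1 x.2.2, fun a ha =>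
      x.2.1 a (Multiset.mem_of_mem_erase ha)⟩,
      fun y => ⟨consPartition ht htn y.1, ?_, Multiset.mem_cons_self t _⟩, ?_, ?_⟩
    · intro a ha
      rcases Multiset.mem_cons.1 ha with rfl | ha
      · exact le_rfl
      · exact y.2 a ha
    · rintro ⟨P, hP⟩
      apply Subtype.ext
      apply Nat.Partition.ext
      show t ::ₘ P.parts.erase t = P.parts
      exact Multiset.cons_erase hP.2
    · rintro ⟨Q, hQ⟩
      apply Subtype.ext
      apply Nat.Partition.ext
      show (t ::ₘ Q.parts).erase t = Q.parts
      exact Multiset.erase_cons_head t _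
  have h2 : Nat.card { P : n.Partition // (∀ a ∈ P.parts, a ≤ t) ∧ ¬ t ∈ P.parts }
      = bddCount (t - 1) n := by
    rw [bddCount]
    refine Nat.card_congr (Equiv.subtypeEquivRight fun P => ?_)
    constructor
    · rintro ⟨ha1, ha2⟩ a ha
      have := ha1 a ha
      have : a ≠ t := fun h => ha2 (h ▸ ha)
      omega
    · intro h
      refine ⟨fun a ha => by have := h a ha; omega, fun hmem => by have := h t hmem; omega⟩
  rw [bddCount, card_split (fun P : n.Partition => ∀ a ∈ P.parts, a ≤ t)
    (fun P => t ∈ P.parts), h1, h2, Nat.add_comm]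

lemma bddCount_small {t n : ℕ} (ht : 1 ≤ t) (htn : n < t) :
    bddCount t n = bddCount (t - 1) n := by
  rw [bddCount, bddCount]
  refine Nat.card_congr (Equiv.subtypeEquivRight fun P => ?_)
  constructor
  · intro h a ha
    have h1 := mem_le_sum ha
    rw [P.parts_sum] at h1
    omega
  · intro h a ha
    have := h a ha
    omega

/-- Subtract `t` from the largest part. -/
def reducePartition (n t : ℕ) (P : n.Partition) (hne : P.parts ≠ 0)
    (hbd : ∀ a ∈ P.parts, ∀ b ∈ P.parts, a ≤ b + t) (hbig : t < P.parts.sup) :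
    (n - t).Partition where
  parts := (P.parts.sup - t) ::ₘ P.parts.erase P.parts.sup
  parts_pos := by
    intro i hi
    rcases Multiset.mem_cons.1 hi with rfl | hi
    · omega
    · exact P.parts_pos (Multiset.mem_of_mem_erase hi)
  parts_sum := by
    have hM : P.parts.sup ∈ P.parts := msup_mem hne
    have h1 : P.parts.sup + (P.parts.erase P.parts.sup).sum = n := by
      rw [← Multiset.sum_cons, Multiset.cons_erase hM, P.parts_sum]
    rw [Multiset.sum_cons]
    omega

lemma sup_big {t : ℕ} {s : Multiset ℕ} (h : ¬ ∀ a ∈ s, a ≤ t) : t < s.sup := by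
  push_neg at h
  obtain ⟨a, ha, hat⟩ := h
  have := Multiset.le_sup ha
  omega

lemma reduce_mem (n t : ℕ) (P : n.Partition) (hne : P.parts ≠ 0)
    (hbd : ∀ a ∈ P.parts, ∀ b ∈ P.parts, a ≤ b + t) (hbig : t < P.parts.sup) :
    (reducePartition n t P hne hbd hbig).parts ≠ 0 ∧
      ∀ a ∈ (reducePartition n t P hne hbd hbig).parts,
        ∀ b ∈ (reducePartition n t P hne hbd hbig).parts, a ≤ b + t := by
  have hM : P.parts.sup ∈ P.parts := msup_mem hne
  refine ⟨Multiset.cons_ne_zero, ?_⟩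
  intro a ha b hb
  rcases Multiset.mem_cons.1 ha with rfl | ha <;>
    rcases Multiset.mem_cons.1 hb with rfl | hb
  · omega
  · have := hbd P.parts.sup hM b (Multiset.mem_of_mem_erase hb)
    omega
  · have := Multiset.le_sup (Multiset.mem_of_mem_erase ha)
    omega
  · exact hbd a (Multiset.mem_of_mem_erase ha) b (Multiset.mem_of_mem_erase hb)

lemma card_big (n t : ℕ) (ht : 1 ≤ t) :
    Nat.card {P : n.Partition // (P.parts ≠ 0 ∧ ∀ a ∈ P.parts, ∀ b ∈ P.parts, a ≤ b + t)
        ∧ ¬ ∀ a ∈ P.parts, a ≤ t}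
      = boundedDiffCount (n - t) t := by
  rw [boundedDiffCount]
  apply Nat.card_eq_of_bijective
    (fun x => ⟨reducePartition n t x.1 x.2.1.1 x.2.1.2 (sup_big x.2.2),
      reduce_mem n t x.1 x.2.1.1 x.2.1.2 (sup_big x.2.2)⟩)
  constructor
  -- injective
  · rintro ⟨P, ⟨hne, hbd⟩, hbig⟩ ⟨P', ⟨hne', hbd'⟩, hbig'⟩ heq
    have hM : P.parts.sup ∈ P.parts := msup_mem hne
    have hM' : P'.parts.sup ∈ P'.parts := msup_mem hne'
    have hb : t < P.parts.sup := sup_big hbig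
    have hb' : t < P'.parts.sup := sup_big hbig'
    set M := P.parts.sup with hMdef
    set M' := P'.parts.sup with hMdef'
    have hparts : (M - t) ::ₘ P.parts.erase M = (M' - t) ::ₘ P'.parts.erase M' :=
      congrArg (fun z : {Q : (n - t).Partition // Q.parts ≠ 0 ∧
        ∀ a ∈ Q.parts, ∀ b ∈ Q.parts, a ≤ b + t} => z.1.parts) heq
    have hminL : ∀ x ∈ (M - t) ::ₘ P.parts.erase M, M - t ≤ x := by
      intro x hx
      rcases Multiset.mem_cons.1 hx with rfl | hx
      · exact le_rfl
      · have := hbd M hM x (Multiset.mem_of_mem_erase hx)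
        omega
    have hminR : ∀ x ∈ (M' - t) ::ₘ P'.parts.erase M', M' - t ≤ x := by
      intro x hx
      rcases Multiset.mem_cons.1 hx with rfl | hx
      · exact le_rfl
      · have := hbd' M' hM' x (Multiset.mem_of_mem_erase hx)
        omega
    have h1 : M - t ≤ M' - t := by
      refine hminL (M' - t) ?_
      rw [hparts]; exact Multiset.mem_cons_self _ _
    have h2 : M' - t ≤ M - t := by
      refine hminR (M - t) ?_
      rw [← hparts]; exact Multiset.mem_cons_self _ _
    have hMM : M = M' := by omega
    apply Subtype.ext
    apply Nat.Partition.ext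
    rw [hMM] at hparts
    rw [← Multiset.cons_erase hM, ← Multiset.cons_erase hM', hMM]
    congr 1
    exact (Multiset.cons_inj_right _).1 hparts
  -- surjective
  · rintro ⟨Q, hQne, hQbd⟩
    have hQfin : Q.parts.toFinset.Nonempty := by
      rw [Multiset.toFinset_nonempty]; exact hQne
    set s := Q.parts.toFinset.min' hQfin with hsdef
    have hs : s ∈ Q.parts := Multiset.mem_toFinset.1 (Q.parts.toFinset.min'_mem hQfin)
    have hsmin : ∀ b ∈ Q.parts, s ≤ b := fun b hb =>
      Q.parts.toFinset.min'_le b (Multiset.mem_toFinset.2 hb)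
    have hspos : 0 < s := Q.parts_pos hs
    have hsum : s + (Q.parts.erase s).sum = n - t := by
      rw [← Multiset.sum_cons, Multiset.cons_erase hs, Q.parts_sum]
    have htn : t + 1 ≤ n := by omega
    have hbP : ∀ x ∈ Q.parts, x ≤ s + t := fun x hx => hQbd x hx s hs
    refine ⟨⟨⟨(s + t) ::ₘ Q.parts.erase s, ?_, ?_⟩, ⟨?_, ?_⟩, ?_⟩, ?_⟩
    · intro i hi
      rcases Multiset.mem_cons.1 hi with rfl | hi
      · omega
      · exact Q.parts_pos (Multiset.mem_of_mem_erase hi)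
    · rw [Multiset.sum_cons]; omega
    · exact Multiset.cons_ne_zero
    · intro a ha b hb
      rcases Multiset.mem_cons.1 ha with rfl | ha <;>
        rcases Multiset.mem_cons.1 hb with rfl | hb
      · omega
      · have h3 := hsmin b (Multiset.mem_of_mem_erase hb)
        omega
      · have h3 := hbP a (Multiset.mem_of_mem_erase ha)
        omega
      · exact hQbd a (Multiset.mem_of_mem_erase ha) b (Multiset.mem_of_mem_erase hb)
    · push_neg
      exact ⟨s + t, Multiset.mem_cons_self _ _, by omega⟩
    · -- f of this partition is Q
      apply Subtype.ext
      apply Nat.Partition.ext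
      have hsup : ((s + t) ::ₘ Q.parts.erase s).sup = s + t := by
        apply le_antisymm
        · rw [Multiset.sup_le]
          intro b hb
          rcases Multiset.mem_cons.1 hb with rfl | hb
          · exact le_rfl
          · exact hbP b (Multiset.mem_of_mem_erase hb)
        · exact Multiset.le_sup (Multiset.mem_cons_self _ _)
      show (((s + t) ::ₘ Q.parts.erase s).sup - t) ::ₘ
          ((s + t) ::ₘ Q.parts.erase s).erase (((s + t) ::ₘ Q.parts.erase s).sup)
        = Q.parts
      rw [hsup, Multiset.erase_cons_head, Nat.add_sub_cancel, Multiset.cons_erase hs]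

lemma boundedDiffCount_rec {n t : ℕ} (hn : 1 ≤ n) (ht : 1 ≤ t) :
    boundedDiffCount n t = bddCount t n + boundedDiffCount (n - t) t := by
  classical
  rw [boundedDiffCount, card_split
    (fun P : n.Partition => P.parts ≠ 0 ∧ ∀ a ∈ P.parts, ∀ b ∈ P.parts, a ≤ b + t)
    (fun P : n.Partition => ∀ a ∈ P.parts, a ≤ t), card_big n t ht]
  congr 1
  rw [bddCount]
  refine Nat.card_congr (Equiv.subtypeEquivRight fun P => ?_)
  constructor
  · rintro ⟨-, h⟩; exact h
  · intro h
    refine ⟨⟨?_, fun a _ b hb => by have := h a ‹_›; omega⟩, h⟩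
    intro h0
    have := P.parts_sum
    rw [h0] at this
    simp at this
    omega

lemma coeff_mul_one_sub_X_pow (f : PowerSeries ℤ) (k n : ℕ) :
    PowerSeries.coeff n (f * (1 - PowerSeries.X ^ k))
      = PowerSeries.coeff n f - if k ≤ n then PowerSeries.coeff (n - k) f else 0 := by
  rw [mul_sub, mul_one, map_sub, PowerSeries.coeff_mul_X_pow']

lemma Bstep {t : ℕ} (ht : 1 ≤ t) :
    (PowerSeries.mk fun n => (bddCount t n : ℤ)) * (1 - PowerSeries.X ^ t)
      = PowerSeries.mk fun n => (bddCount (t - 1) n : ℤ) := by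
  ext n
  rw [coeff_mul_one_sub_X_pow]
  simp only [PowerSeries.coeff_mk]
  split_ifs with h
  · rw [bddCount_rec ht h]
    push_cast
    ring
  · rw [bddCount_small ht (by omega)]
    ring

lemma Bprod : ∀ t : ℕ,
    (PowerSeries.mk fun n => (bddCount t n : ℤ)) * ∏ i ∈ Finset.Icc 1 t,
      (1 - (PowerSeries.X : PowerSeries ℤ) ^ i) = 1 := by
  intro t
  induction t with
  | zero =>
    rw [show Finset.Icc 1 0 = ∅ from rfl, Finset.prod_empty, mul_one]
    ext n
    rw [PowerSeries.coeff_mk, PowerSeries.coeff_one]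
    rcases Nat.eq_zero_or_pos n with rfl | hn
    · rw [bddCount_zero_right]; simp
    · rw [bddCount_zero_left hn, if_neg (by omega)]
      simp
  | succ t ih =>
    rw [← Finset.insert_Icc_right_eq_Icc_add_one (by omega : 1 ≤ t + 1),
      Finset.prod_insert (by simp), ← mul_assoc, Bstep (by omega : 1 ≤ t + 1)]
    simpa using ih

lemma Astep {t : ℕ} (ht : 1 ≤ t) :
    (PowerSeries.mk fun n => if n = 0 then 0 else (boundedDiffCount n t : ℤ))
        * (1 - PowerSeries.X ^ t)
      = (PowerSeries.mk fun n => (bddCount t n : ℤ)) - 1 := by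
  have hkey : ∀ m, (if m = 0 then (0:ℤ) else (boundedDiffCount m t : ℤ))
      = (boundedDiffCount m t : ℤ) := by
    intro m
    split_ifs with h
    · rw [h, boundedDiffCount_zero]; simp
    · rfl
  ext n
  rw [map_sub, coeff_mul_one_sub_X_pow]
  simp only [PowerSeries.coeff_mk, PowerSeries.coeff_one, hkey]
  rcases Nat.eq_zero_or_pos n with rfl | hn
  · rw [boundedDiffCount_zero, bddCount_zero_right, if_neg (by omega), if_pos rfl]
    norm_num
  · rw [if_neg (show ¬ n = 0 by omega), boundedDiffCount_rec hn ht]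
    split_ifs with h2
    · push_cast
      ring
    · rw [show n - t = 0 by omega, boundedDiffCount_zero]
      push_cast
      ring

/-- The generating function identity
`(∑_{n≥1} p(n,t) Xⁿ) (1 - X^t) ∏_{i=1}^t (1 - X^i) = 1 - ∏_{i=1}^t (1 - X^i)`
in `ℤ⟦X⟧`. -/
theorem bounded_differences_generating_function (t : ℕ) (ht : 1 ≤ t) :
    (PowerSeries.mk fun n => if n = 0 then 0 else (boundedDiffCount n t : ℤ))
        * (1 - (PowerSeries.X : PowerSeries ℤ) ^ t)
        * ∏ i ∈ Finset.Icc 1 t, (1 - (PowerSeries.X : PowerSeries ℤ) ^ i)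
      = 1 - ∏ i ∈ Finset.Icc 1 t, (1 - (PowerSeries.X : PowerSeries ℤ) ^ i) := by
  rw [Astep ht, sub_mul, one_mul, Bprod t]
end

section
/- For every integer n ≥ 1, the number of partitions of n whose largest part exceeds its smallest part by at most 1 equals n; that is, p(n,1) = n. -/
/-- Any multiset of k naturals summing to n with pairwise difference ≤ 1 is canonical. -/
lemma canon_unique (n k : ℕ) (hk : 0 < k) (s : Multiset ℕ)
    (hdiff : ∀ a ∈ s, ∀ b ∈ s, a ≤ b + 1) (hcard : Multiset.card s = k)
    (hsum : s.sum = n) :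
    s = Multiset.replicate (n % k) (n / k + 1) + Multiset.replicate (k - n % k) (n / k) := by
  have hne : s ≠ 0 := by
    intro h; subst h; simp at hcard; omega
  have hfne : s.toFinset.Nonempty := by
    simpa [Multiset.toFinset_nonempty] using hne
  set a := s.toFinset.min' hfne with hadef
  have ha : a ∈ s := by
    have := s.toFinset.min'_mem hfne; simpa [Multiset.mem_toFinset] using this
  have hmin : ∀ b ∈ s, a ≤ b := by
    intro b hb
    exact s.toFinset.min'_le b (by simpa [Multiset.mem_toFinset] using hb)
  have helem : ∀ b ∈ s, b = a ∨ b = a + 1 := by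
    intro b hb
    have h1 := hdiff b hb a ha
    have h2 := hmin b hb
    omega
  set c := s.count (a + 1) with hcdef
  set d := s.count a with hddef
  have hs : s = Multiset.replicate d a + Multiset.replicate c (a + 1) := by
    ext x
    simp only [Multiset.count_add, Multiset.count_replicate]
    rcases eq_or_ne x a with rfl | hx1
    · rw [if_pos rfl, if_neg (by omega)]
      omega
    · rcases eq_or_ne x (a + 1) with rfl | hx2
      · rw [if_neg (by omega), if_pos rfl]
        omega
      · rw [if_neg (by omega), if_neg (by omega)]
        have hxs : x ∉ s := fun hxs => by rcases helem x hxs with h | h <;> omega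
        simp [Multiset.count_eq_zero_of_notMem hxs]
  have hd1 : 1 ≤ d := by
    rw [hddef]; exact Multiset.one_le_count_iff_mem.2 ha
  have hcardeq : d + c = k := by
    have := congrArg Multiset.card hs
    simp [hcard] at this
    omega
  have hsumeq : d * a + c * (a + 1) = n := by
    have := congrArg Multiset.sum hs
    simp [Multiset.sum_replicate, smul_eq_mul, hsum] at this
    omega
  have hn_eq : n = k * a + c := by
    have h : d * a + c * (a + 1) = (d + c) * a + c := by ring
    rw [h, hcardeq] at hsumeq
    omega
  have hck : c < k := by omega
  have hdiv : n / k = a := by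
    rw [hn_eq, Nat.mul_add_div hk, Nat.div_eq_of_lt hck]
    omega
  have hmod : n % k = c := by
    rw [hn_eq, Nat.mul_add_mod, Nat.mod_eq_of_lt hck]
  rw [hdiv, hmod, hs]
  have hdk : d = k - c := by omega
  rw [hdk, add_comm]

def canonPart (n k : ℕ) (hk : 1 ≤ k) (hkn : k ≤ n) : n.Partition where
  parts := Multiset.replicate (n % k) (n / k + 1) + Multiset.replicate (k - n % k) (n / k)
  parts_pos := by
    intro x hx
    have hq : 1 ≤ n / k := (Nat.one_le_div_iff hk).2 hkn
    simp only [Multiset.mem_add, Multiset.mem_replicate] at hx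
    rcases hx with ⟨_, h⟩ | ⟨_, h⟩ <;> omega
  parts_sum := by
    have h1 := Nat.div_add_mod n k
    have h2 : n % k < k := Nat.mod_lt _ hk
    rw [Multiset.sum_add, Multiset.sum_replicate, Multiset.sum_replicate, smul_eq_mul,
      smul_eq_mul]
    have e1 : (k - n % k) * (n / k) = k * (n / k) - (n % k) * (n / k) := Nat.sub_mul _ _ _
    have e2 : (n % k) * (n / k + 1) = (n % k) * (n / k) + n % k := by ring
    have e3 : (n % k) * (n / k) ≤ k * (n / k) := Nat.mul_le_mul_right _ (le_of_lt h2)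
    rw [e2, e1]
    generalize hA : (n % k) * (n / k) = A at e3 ⊢
    generalize hB : k * (n / k) = B at e3 h1 ⊢
    omega

lemma parts_canonPart (n k : ℕ) (hk : 1 ≤ k) (hkn : k ≤ n) :
    (canonPart n k hk hkn).parts
      = Multiset.replicate (n % k) (n / k + 1) + Multiset.replicate (k - n % k) (n / k) := rfl

lemma card_canonPart (n k : ℕ) (hk : 1 ≤ k) (hkn : k ≤ n) :
    Multiset.card (canonPart n k hk hkn).parts = k := by
  have h2 : n % k < k := Nat.mod_lt _ hk
  rw [parts_canonPart]
  simp
  omega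

def fmap (n : ℕ) (i : Fin n) :
    {P : n.Partition // P.parts ≠ 0 ∧ ∀ a ∈ P.parts, ∀ b ∈ P.parts, a ≤ b + 1} :=
  ⟨canonPart n ((i : ℕ) + 1) (Nat.le_add_left 1 i) i.isLt, by
    constructor
    · intro h
      have hc := card_canonPart n ((i : ℕ) + 1) (Nat.le_add_left 1 i) i.isLt
      rw [h] at hc; simp at hc
    · intro a ha b hb
      rw [parts_canonPart] at ha hb
      simp only [Multiset.mem_add, Multiset.mem_replicate] at ha hb
      rcases ha with ⟨_, ha⟩ | ⟨_, ha⟩ <;> rcases hb with ⟨_, hb⟩ | ⟨_, hb⟩ <;> omega⟩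

/-- The number of partitions of `n` whose largest part exceeds its smallest part by at
most `1` equals `n`. -/
theorem bounded_diff_one_eq_n (n : ℕ) (hn : 1 ≤ n) :
    boundedDiffCount n 1 = n := by
  classical
  have hbij : Function.Bijective (fmap n) := by
    constructor
    · intro i j hij
      have hi : Multiset.card ((fmap n i).1.parts) = (i : ℕ) + 1 :=
        card_canonPart n ((i : ℕ) + 1) (Nat.le_add_left 1 i) i.isLt
      have hj : Multiset.card ((fmap n j).1.parts) = (j : ℕ) + 1 :=
        card_canonPart n ((j : ℕ) + 1) (Nat.le_add_left 1 j) j.isLt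
      rw [hij] at hi
      rw [hj] at hi
      ext
      omega
    · rintro ⟨P, hne, hdiff⟩
      set k := Multiset.card P.parts with hkdef
      have hk0 : 0 < k := by
        rw [hkdef]
        simpa [Multiset.card_pos] using hne
      have hkn : k ≤ n := by
        have h1 : ∀ a ∈ P.parts, 1 ≤ a := fun a ha => P.parts_pos ha
        calc k = Multiset.card P.parts • 1 := by simp [hkdef]
        _ ≤ P.parts.sum := Multiset.card_nsmul_le_sum h1
        _ = n := P.parts_sum
      have hik : k - 1 < n := by omega
      refine ⟨⟨k - 1, hik⟩, ?_⟩
      have hkk : k - 1 + 1 = k := by omega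
      have hP := canon_unique n k hk0 P.parts hdiff rfl P.parts_sum
      apply Subtype.ext
      apply Nat.Partition.ext
      show Multiset.replicate (n % (k - 1 + 1)) (n / (k - 1 + 1) + 1) +
          Multiset.replicate ((k - 1 + 1) - n % (k - 1 + 1)) (n / (k - 1 + 1)) = P.parts
      rw [hkk]
      exact hP.symm
  have h := Nat.card_eq_of_bijective (fmap n) hbij
  simpa [boundedDiffCount] using h.symm
end

section
/- For every integer k ≥ 0, p(2k, 2) = 2·C(k+1, 2) − C(k, 2), where C(a,b) denotes the binomial coefficient a choose b. -/
open Finset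

def Q (n : ℕ) : Finset (ℕ × ℕ × ℕ × ℕ) :=
  ((Icc 1 n ×ˢ Icc 1 n ×ˢ range (n+1) ×ˢ range (n+1)).filter
    fun p => p.1 * p.2.1 + p.2.2.1 + p.2.2.2 = n ∧ p.2.2.2 ≤ p.2.2.1 ∧ p.2.2.1 < p.1)

lemma mem_Q {n j m x y : ℕ} :
    (j, m, x, y) ∈ Q n ↔ j * m + x + y = n ∧ 1 ≤ m ∧ y ≤ x ∧ x < j := by
  simp only [Q, mem_filter, mem_product, mem_Icc, mem_range]
  constructor
  · rintro ⟨⟨⟨h1, _⟩, ⟨hm1, _⟩, _, _⟩, hs, hyx, hxj⟩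
    exact ⟨hs, hm1, hyx, hxj⟩
  · rintro ⟨hs, hm1, hyx, hxj⟩
    have hj1 : 1 ≤ j := by omega
    have hjn : j ≤ n := le_trans (Nat.le_mul_of_pos_right j hm1) (by omega)
    have hmn : m ≤ n := le_trans (Nat.le_mul_of_pos_left m hj1) (by omega)
    refine ⟨⟨⟨hj1, hjn⟩, ⟨hm1, hmn⟩, ?_, ?_⟩, hs, hyx, hxj⟩ <;> omega

/-- the multiset associated to a quadruple -/
def msOf (p : ℕ × ℕ × ℕ × ℕ) : Multiset ℕ :=
  Multiset.replicate (p.1 - p.2.2.1) p.2.1 + Multiset.replicate (p.2.2.1 - p.2.2.2) (p.2.1 + 1)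
    + Multiset.replicate p.2.2.2 (p.2.1 + 2)

lemma msOf_count_m {j m x y : ℕ} : (msOf (j,m,x,y)).count m = j - x := by
  simp [msOf, Multiset.count_replicate]
lemma msOf_count_m1 {j m x y : ℕ} : (msOf (j,m,x,y)).count (m+1) = x - y := by
  simp [msOf, Multiset.count_replicate]
lemma msOf_count_m2 {j m x y : ℕ} : (msOf (j,m,x,y)).count (m+2) = y := by
  simp [msOf, Multiset.count_replicate]

lemma msOf_mem {j m x y v : ℕ} (hxj : x < j) :
    v ∈ msOf (j,m,x,y) ↔ (v = m ∨ (v = m + 1 ∧ y < x) ∨ (v = m + 2 ∧ 0 < y)) := by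
  simp [msOf, Multiset.mem_replicate]
  omega

lemma msOf_sum {j m x y : ℕ} (hyx : y ≤ x) (hxj : x < j) :
    (msOf (j,m,x,y)).sum = j * m + x + y := by
  simp only [msOf, Multiset.sum_add, Multiset.sum_replicate, smul_eq_mul]
  zify [hyx, hxj.le]
  ring

lemma msOf_card {j m x y : ℕ} (hyx : y ≤ x) (hxj : x < j) :
    Multiset.card (msOf (j,m,x,y)) = j := by
  simp only [msOf, Multiset.card_add, Multiset.card_replicate]
  omega

lemma msOf_mem' {p : ℕ × ℕ × ℕ × ℕ} {v : ℕ} (hxj : p.2.2.1 < p.1) :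
    v ∈ msOf p ↔ (v = p.2.1 ∨ (v = p.2.1 + 1 ∧ p.2.2.2 < p.2.2.1) ∨ (v = p.2.1 + 2 ∧ 0 < p.2.2.2)) := by
  obtain ⟨j, m, x, y⟩ := p
  exact msOf_mem hxj

lemma msOf_sum' {p : ℕ × ℕ × ℕ × ℕ} (hyx : p.2.2.2 ≤ p.2.2.1) (hxj : p.2.2.1 < p.1) :
    (msOf p).sum = p.1 * p.2.1 + p.2.2.1 + p.2.2.2 := by
  obtain ⟨j, m, x, y⟩ := p
  exact msOf_sum hyx hxj

lemma msOf_card' {p : ℕ × ℕ × ℕ × ℕ} (hyx : p.2.2.2 ≤ p.2.2.1) (hxj : p.2.2.1 < p.1) :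
    Multiset.card (msOf p) = p.1 := by
  obtain ⟨j, m, x, y⟩ := p
  exact msOf_card hyx hxj

lemma mem_Q' {n : ℕ} {p : ℕ × ℕ × ℕ × ℕ} (h : p ∈ Q n) :
    p.1 * p.2.1 + p.2.2.1 + p.2.2.2 = n ∧ 1 ≤ p.2.1 ∧ p.2.2.2 ≤ p.2.2.1 ∧ p.2.2.1 < p.1 := by
  obtain ⟨j, m, x, y⟩ := p
  exact mem_Q.1 h

noncomputable def fPart (n : ℕ) (q : {p // p ∈ Q n}) :
    { P : n.Partition // P.parts ≠ 0 ∧ ∀ a ∈ P.parts, ∀ b ∈ P.parts, a ≤ b + 2 } :=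
  ⟨⟨msOf q.1, by
      intro i hi
      obtain ⟨hs, hm1, hyx, hxj⟩ := mem_Q' q.2
      rw [msOf_mem' hxj] at hi
      rcases hi with h|h|h <;> omega, by
      obtain ⟨hs, hm1, hyx, hxj⟩ := mem_Q' q.2
      rw [msOf_sum' hyx hxj]; exact hs⟩, by
    intro h0
    obtain ⟨hs, hm1, hyx, hxj⟩ := mem_Q' q.2
    have hc := msOf_card' hyx hxj
    have h0' : msOf q.1 = 0 := h0
    rw [h0'] at hc
    simp only [Multiset.card_zero] at hc
    omega, by
    intro a ha b hb
    obtain ⟨hs, hm1, hyx, hxj⟩ := mem_Q' q.2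
    simp only at ha hb
    rw [msOf_mem' hxj] at ha hb
    rcases ha with h|h|h <;> rcases hb with h'|h'|h' <;> omega⟩

lemma fPart_parts (n : ℕ) (q : {p // p ∈ Q n}) : (fPart n q).1.parts = msOf q.1 := rfl

lemma card_eq (n : ℕ) : boundedDiffCount n 2 = (Q n).card := by
  have hbij : Function.Bijective (fPart n) := by
    constructor
    · rintro ⟨⟨j1, m1, x1, y1⟩, h1⟩ ⟨⟨j2, m2, x2, y2⟩, h2⟩ h
      have hms : msOf (j1,m1,x1,y1) = msOf (j2,m2,x2,y2) := by
        have := congrArg (fun z => z.1.parts) h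
        simpa [fPart_parts] using this
      rw [mem_Q] at h1 h2
      obtain ⟨hs1, hm1, hyx1, hxj1⟩ := h1
      obtain ⟨hs2, hm2, hyx2, hxj2⟩ := h2
      have hmm : m1 = m2 := by
        have e1 : m1 ∈ msOf (j2,m2,x2,y2) := by
          rw [← hms, msOf_mem hxj1]; left; rfl
        have e2 : m2 ∈ msOf (j1,m1,x1,y1) := by
          rw [hms, msOf_mem hxj2]; left; rfl
        rw [msOf_mem hxj2] at e1
        rw [msOf_mem hxj1] at e2
        rcases e1 with h|h|h <;> rcases e2 with h'|h'|h' <;> omega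
      subst hmm
      have c1 := congrArg (Multiset.count m1) hms
      have c2 := congrArg (Multiset.count (m1+1)) hms
      have c3 := congrArg (Multiset.count (m1+2)) hms
      rw [msOf_count_m, msOf_count_m] at c1
      rw [msOf_count_m1, msOf_count_m1] at c2
      rw [msOf_count_m2, msOf_count_m2] at c3
      have : j1 = j2 ∧ x1 = x2 ∧ y1 = y2 := by omega
      simp [Prod.ext_iff, this.1, this.2.1, this.2.2]
    · rintro ⟨P, hne, hbd⟩
      have hex : {a | a ∈ P.parts}.Nonempty := by
        obtain ⟨a, ha⟩ := Multiset.exists_mem_of_ne_zero hne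
        exact ⟨a, ha⟩
      set m := sInf {a | a ∈ P.parts} with hm
      have hmem : m ∈ P.parts := Nat.sInf_mem hex
      have hmin : ∀ b ∈ P.parts, m ≤ b := fun b hb => Nat.sInf_le hb
      have hmax : ∀ a ∈ P.parts, a ≤ m + 2 := fun a ha => hbd a ha m hmem
      have hm1 : 1 ≤ m := P.parts_pos hmem
      set a1 := P.parts.count m with ha1
      set b1 := P.parts.count (m+1) with hb1
      set y := P.parts.count (m+2) with hy
      have hdec0 : P.parts = Multiset.replicate a1 m + Multiset.replicate b1 (m+1)
          + Multiset.replicate y (m+2) := by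
        ext v
        simp only [Multiset.count_add, Multiset.count_replicate]
        by_cases e1 : v = m
        · subst e1; simp [ha1]; try omega
        · by_cases e2 : v = m + 1
          · subst e2; simp [hb1]; try omega
          · by_cases e3 : v = m + 2
            · subst e3; simp [hy]; try omega
            · have hv0 : P.parts.count v = 0 := by
                rw [Multiset.count_eq_zero_of_notMem]
                intro hv
                have := hmin v hv
                have := hmax v hv
                omega
              rw [hv0]
              simp [Ne.symm e1, Ne.symm e2, Ne.symm e3]
      set j := Multiset.card P.parts with hj
      set x := b1 + y with hx
      have ha1pos : 1 ≤ a1 := by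
        rw [ha1]
        exact Multiset.one_le_count_iff_mem.2 hmem
      have hcard : j = a1 + b1 + y := by
        rw [hj, hdec0]; simp
      have hxj : x < j := by omega
      have hyx : y ≤ x := by omega
      have hdec : P.parts = msOf (j, m, x, y) := by
        rw [hdec0, msOf]
        have e1 : j - x = a1 := by omega
        have e2 : x - y = b1 := by omega
        rw [show ((j,m,x,y) : ℕ×ℕ×ℕ×ℕ).1 = j from rfl]
        simp only [e1, e2]
      have hsum : j * m + x + y = n := by
        have := P.parts_sum
        rw [hdec, msOf_sum hyx hxj] at this
        exact this
      have hQ : (j, m, x, y) ∈ Q n := mem_Q.2 ⟨hsum, hm1, hyx, hxj⟩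
      refine ⟨⟨(j,m,x,y), hQ⟩, ?_⟩
      apply Subtype.ext
      apply Nat.Partition.ext
      rw [fPart_parts]
      exact hdec.symm
  rw [boundedDiffCount, ← Nat.card_congr (Equiv.ofBijective _ hbij),
    Nat.card_eq_fintype_card, Fintype.card_coe]

lemma fiber_small {k j : ℕ} (hj1 : 1 ≤ j) (hjk : j ≤ k) :
    ((Q (2*k)).filter (fun p => p.1 = j)).card = j / 2 + 1 := by
  set n := 2 * k with hn
  set q := n / j with hq
  set r := n % j with hr
  have hj0 : 0 < j := hj1
  have hdm : j * q + r = n := by rw [hq, hr]; exact Nat.div_add_mod n j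
  have hrj : r < j := Nat.mod_lt _ hj0
  have hq2 : 2 ≤ q := by
    rw [hq, Nat.le_div_iff_mul_le hj0]; omega
  have hjq2 : 2 * j ≤ j * q := by
    calc 2 * j = j * 2 := by ring
    _ ≤ j * q := Nat.mul_le_mul_left j hq2
  have hq1j : j * (q - 1) + j = j * q := by
    have h1 : j * (q-1) = j * q - j * 1 := by rw [← Nat.mul_sub]
    omega
  have hpar : j % 2 = 0 → ∃ c, j * q = 2 * c := by
    intro h
    refine ⟨j / 2 * q, ?_⟩
    have h2 : j / 2 * 2 = j := by omega
    calc j * q = (j/2*2) * q := by rw [h2]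
    _ = 2 * (j/2*q) := by ring
  have hset : (Q n).filter (fun p => p.1 = j)
      = ((range (r/2 + 1)).image fun y => (j, q, r - y, y))
        ∪ ((Icc (r+1) ((r+j)/2)).image fun y => (j, q - 1, r + j - y, y)) := by
    ext ⟨j', m, x, y⟩
    simp only [mem_filter, mem_union, mem_image, mem_range, mem_Icc]
    constructor
    · rintro ⟨hQ, rfl⟩
      rw [mem_Q] at hQ
      obtain ⟨hs, hm1, hyx, hxj⟩ := hQ
      have hmq : m ≤ q := by
        rw [hq, Nat.le_div_iff_mul_le hj0]
        have : m * j' = j' * m := by ring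
        omega
      have hjm_le : j' * m ≤ j' * q := Nat.mul_le_mul_left j' hmq
      have hmq1 : q - 1 ≤ m := by
        by_contra hcon
        push_neg at hcon
        have h3 : j' * m ≤ j' * (q-2) := Nat.mul_le_mul_left j' (by omega)
        have h4 : j' * (q-2) + 2 * j' = j' * q := by
          have h5 : j' * (q-2) = j' * q - j' * 2 := by rw [← Nat.mul_sub]
          omega
        omega
      have hcases : m = q ∨ m = q - 1 := by omega
      rcases hcases with rfl | rfl
      · left
        refine ⟨y, by omega, ?_⟩
        have hxr : x = r - y := by omega
        rw [hxr]
      · right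
        refine ⟨y, by omega, ?_⟩
        have hxr : x = r + j' - y := by omega
        rw [hxr]
    · rintro (⟨y0, hy0, heq⟩ | ⟨y0, hy0, heq⟩) <;> cases heq
      · exact ⟨mem_Q.2 ⟨by omega, by omega, by omega, by omega⟩, rfl⟩
      · refine ⟨mem_Q.2 ⟨?_, by omega, by omega, by omega⟩, rfl⟩
        omega
  have hinj1 : Function.Injective (fun y => (j, q, r - y, y)) :=
    fun a b h => by simpa using congrArg (fun p => p.2.2.2) h
  have hinj2 : Function.Injective (fun y => (j, q - 1, r + j - y, y)) :=
    fun a b h => by simpa using congrArg (fun p => p.2.2.2) h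
  have hdisj : Disjoint ((range (r/2 + 1)).image fun y => (j, q, r - y, y))
      ((Icc (r+1) ((r+j)/2)).image fun y => (j, q - 1, r + j - y, y)) := by
    rw [Finset.disjoint_left]
    rintro a ha hb
    simp only [mem_image, mem_range, mem_Icc] at ha hb
    obtain ⟨y0, hy0, rfl⟩ := ha
    obtain ⟨y1, hy1, heq⟩ := hb
    have h4 := congrArg (fun p => p.2.2.2) heq
    simp only at h4
    omega
  rw [hset, card_union_of_disjoint hdisj, card_image_of_injective _ hinj1,
    card_image_of_injective _ hinj2, card_range, Nat.card_Icc]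
  by_cases hje : j % 2 = 0
  · obtain ⟨c, hc⟩ := hpar hje
    omega
  · omega

lemma fiber_large {k j : ℕ} (hjk : k < j) (hj2k : j ≤ 2*k) :
    ((Q (2*k)).filter (fun p => p.1 = j)).card = (2*k - j) / 2 + 1 := by
  set r := 2*k - j with hr
  have hset : (Q (2*k)).filter (fun p => p.1 = j)
      = (range (r/2 + 1)).image fun y => (j, 1, r - y, y) := by
    ext ⟨j', m, x, y⟩
    simp only [mem_filter, mem_image, mem_range]
    constructor
    · rintro ⟨hQ, rfl⟩
      rw [mem_Q] at hQ
      obtain ⟨hs, hm1, hyx, hxj⟩ := hQ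
      have hm : m = 1 := by
        by_contra hcon
        have h2 : j' * 2 ≤ j' * m := Nat.mul_le_mul_left j' (by omega)
        have h3 : j' * 2 = 2 * j' := by ring
        omega
      subst hm
      have h1 : j' * 1 = j' := mul_one j'
      refine ⟨y, by omega, ?_⟩
      have hxr : x = r - y := by omega
      rw [hxr]
    · rintro ⟨y0, hy0, heq⟩
      cases heq
      have h1 : j * 1 = j := mul_one j
      exact ⟨mem_Q.2 ⟨by omega, le_refl 1, by omega, by omega⟩, rfl⟩
  have hinj : Function.Injective (fun y => (j, 1, r - y, y)) :=
    fun a b h => by simpa using congrArg (fun p => p.2.2.2) h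
  rw [hset, card_image_of_injective _ hinj, card_range]

lemma sum_id (k : ℕ) : (∑ j ∈ Icc 1 k, (j + 1)) + k.choose 2 = 2 * ((k+1).choose 2) := by
  induction k with
  | zero => simp
  | succ k ih =>
    rw [Finset.sum_Icc_succ_top (by omega)]
    have hc1 : (k+1+1).choose 2 = (k+1).choose 1 + (k+1).choose 2 := Nat.choose_succ_succ _ _
    have hc2 : (k+1).choose 2 = k.choose 1 + k.choose 2 := Nat.choose_succ_succ _ _
    have hc3 : k.choose 1 = k := Nat.choose_one_right k
    have hc4 : (k+1).choose 1 = k + 1 := Nat.choose_one_right (k+1)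
    omega

lemma Q_card (k : ℕ) : (Q (2*k)).card + k.choose 2 = 2 * ((k+1).choose 2) := by
  have hfib : (Q (2*k)).card = ∑ j ∈ Icc 1 (2*k), ((Q (2*k)).filter (fun p => p.1 = j)).card := by
    apply card_eq_sum_card_fiberwise
    intro p hp
    obtain ⟨hs, hm1, hyx, hxj⟩ := mem_Q' hp
    have h1 : p.1 ≤ p.1 * p.2.1 := Nat.le_mul_of_pos_right p.1 hm1
    rw [Finset.mem_coe, mem_Icc]
    omega
  have hsplit : Icc 1 (2*k) = Icc 1 k ∪ Icc (k+1) (2*k) := by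
    ext j; simp only [mem_Icc, mem_union]; omega
  have hdisj : Disjoint (Icc 1 k) (Icc (k+1) (2*k)) := by
    rw [Finset.disjoint_left]
    intro a ha hb
    simp only [mem_Icc] at ha hb
    omega
  rw [hfib, hsplit, Finset.sum_union hdisj]
  have h1 : ∑ j ∈ Icc 1 k, ((Q (2*k)).filter (fun p => p.1 = j)).card
      = ∑ j ∈ Icc 1 k, (j / 2 + 1) := by
    apply Finset.sum_congr rfl
    intro j hj
    rw [mem_Icc] at hj
    exact fiber_small hj.1 hj.2
  have h2a : ∑ j ∈ Icc (k+1) (2*k), ((Q (2*k)).filter (fun p => p.1 = j)).card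
      = ∑ j ∈ Icc (k+1) (2*k), ((2*k - j) / 2 + 1) := by
    apply Finset.sum_congr rfl
    intro j hj
    rw [mem_Icc] at hj
    exact fiber_large (by omega) hj.2
  have h2b : ∑ j ∈ Icc (k+1) (2*k), ((2*k - j) / 2 + 1)
      = ∑ j ∈ Icc 1 k, ((j - 1) / 2 + 1) := by
    apply Finset.sum_nbij' (fun j => 2*k+1-j) (fun j => 2*k+1-j)
    · intro a ha; rw [mem_Icc] at *; omega
    · intro a ha; rw [mem_Icc] at *; omega
    · intro a ha; rw [mem_Icc] at ha; omega
    · intro a ha; rw [mem_Icc] at ha; omega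
    · intro a ha; rw [mem_Icc] at ha; omega
  have h2 : ∑ j ∈ Icc (k+1) (2*k), ((Q (2*k)).filter (fun p => p.1 = j)).card
      = ∑ j ∈ Icc 1 k, ((j - 1) / 2 + 1) := by rw [h2a, h2b]
  rw [h1, h2, ← Finset.sum_add_distrib]
  have h3 : ∑ j ∈ Icc 1 k, (j / 2 + 1 + ((j - 1) / 2 + 1)) = ∑ j ∈ Icc 1 k, (j + 1) := by
    apply Finset.sum_congr rfl
    intro j hj
    rw [mem_Icc] at hj
    omega
  rw [h3]
  exact sum_id k

/-- `p(2k, 2) = 2 C(k+1, 2) - C(k, 2)`. -/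
theorem bounded_diff_two_even (k : ℕ) :
    (boundedDiffCount (2 * k) 2 : ℤ)
      = 2 * ((k + 1).choose 2 : ℤ) - (k.choose 2 : ℤ) := by
  have h1 := Q_card k
  have h2 := card_eq (2 * k)
  omega
end

section
/- For every integer k ≥ 0, p(2k+1, 2) = C(k+2, 2), where C(a,b) denotes the binomial coefficient a choose b. -/
def bdCond (n : ℕ) (q : ℕ × ℕ × ℕ × ℕ) : Prop :=
  1 ≤ q.1 ∧ 1 ≤ q.2.1 ∧ q.1 * q.2.1 + (q.1 + 1) * q.2.2.1 + (q.1 + 2) * q.2.2.2 = n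

/-- The multiset associated to a tuple `(a, x, y, z)`. -/
def tupMS (q : ℕ × ℕ × ℕ × ℕ) : Multiset ℕ :=
  Multiset.replicate q.2.1 q.1 + Multiset.replicate q.2.2.1 (q.1 + 1) +
    Multiset.replicate q.2.2.2 (q.1 + 2)

lemma tupMS_sum (q : ℕ × ℕ × ℕ × ℕ) :
    (tupMS q).sum = q.1 * q.2.1 + (q.1 + 1) * q.2.2.1 + (q.1 + 2) * q.2.2.2 := by
  obtain ⟨a, x, y, z⟩ := q
  simp [tupMS, Multiset.sum_replicate, mul_comm]

lemma tupMS_mem {q : ℕ × ℕ × ℕ × ℕ} {m : ℕ} :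
    m ∈ tupMS q ↔ (q.2.1 ≠ 0 ∧ m = q.1) ∨ (q.2.2.1 ≠ 0 ∧ m = q.1 + 1) ∨
      (q.2.2.2 ≠ 0 ∧ m = q.1 + 2) := by
  simp [tupMS, Multiset.mem_replicate]
  tauto

lemma tupMS_count (a x y z : ℕ) :
    (tupMS (a, x, y, z)).count a = x ∧ (tupMS (a, x, y, z)).count (a + 1) = y ∧
      (tupMS (a, x, y, z)).count (a + 2) = z := by
  refine ⟨?_, ?_, ?_⟩ <;>
  · simp only [tupMS, Multiset.count_add, Multiset.count_replicate]
    split_ifs <;> omega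

lemma fst_mem_tupMS (a x y z : ℕ) (hx : x ≠ 0) : a ∈ tupMS (a, x, y, z) :=
  tupMS_mem.2 (Or.inl ⟨hx, rfl⟩)

/-- The partition associated to a tuple. -/
def tupPart (n : ℕ) (q : ℕ × ℕ × ℕ × ℕ) (h : bdCond n q) : n.Partition where
  parts := tupMS q
  parts_pos := by
    intro i hi
    rw [tupMS_mem] at hi
    obtain ⟨ha, hx, hs⟩ := h
    omega
  parts_sum := by rw [tupMS_sum]; exact h.2.2

lemma card_bdSet_eq (n : ℕ) :
    boundedDiffCount n 2 = Nat.card { q : ℕ × ℕ × ℕ × ℕ // bdCond n q } := by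
  rw [boundedDiffCount]
  have hf : ∀ (s : { q : ℕ × ℕ × ℕ × ℕ // bdCond n q }),
      (tupPart n s.1 s.2).parts ≠ 0 ∧
        ∀ a ∈ (tupPart n s.1 s.2).parts, ∀ b ∈ (tupPart n s.1 s.2).parts, a ≤ b + 2 := by
    rintro ⟨⟨a, x, y, z⟩, ha, hx, hs⟩
    simp only at ha hx hs
    constructor
    · intro h0
      have : a ∈ tupMS (a, x, y, z) := fst_mem_tupMS a x y z (by omega)
      rw [show tupMS (a,x,y,z) = (tupPart n (a,x,y,z) ⟨ha, hx, hs⟩).parts from rfl, h0] at this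
      exact absurd this (Multiset.notMem_zero a)
    · intro b hb c hc
      rw [show (tupPart n (a,x,y,z) ⟨ha, hx, hs⟩).parts = tupMS (a,x,y,z) from rfl,
        tupMS_mem] at hb hc
      simp only at hb hc
      omega
  apply (Nat.card_eq_of_bijective
    (f := fun s => ⟨tupPart n s.1 s.2, hf s⟩) ?_).symm
  constructor
  · rintro ⟨⟨a1, x1, y1, z1⟩, h1⟩ ⟨⟨a2, x2, y2, z2⟩, h2⟩ heq
    simp only [Subtype.mk.injEq] at heq
    have heq' : tupMS (a1, x1, y1, z1) = tupMS (a2, x2, y2, z2) :=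
      congrArg Nat.Partition.parts heq
    obtain ⟨ha1, hx1, hs1⟩ := h1
    obtain ⟨ha2, hx2, hs2⟩ := h2
    simp only at ha1 hx1 hs1 ha2 hx2 hs2
    have haa : a1 = a2 := by
      have m1 : a1 ∈ tupMS (a2, x2, y2, z2) := by
        rw [← heq']; exact fst_mem_tupMS a1 x1 y1 z1 (by omega)
      have m2 : a2 ∈ tupMS (a1, x1, y1, z1) := by
        rw [heq']; exact fst_mem_tupMS a2 x2 y2 z2 (by omega)
      rw [tupMS_mem] at m1 m2
      simp only at m1 m2
      omega
    subst haa
    have c1 := tupMS_count a1 x1 y1 z1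
    have c2 := tupMS_count a1 x2 y2 z2
    rw [heq'] at c1
    have ex : x1 = x2 := by rw [← c1.1, c2.1]
    have ey : y1 = y2 := by rw [← c1.2.1, c2.2.1]
    have ez : z1 = z2 := by rw [← c1.2.2, c2.2.2]
    apply Subtype.ext
    simp only [Prod.mk.injEq]
    exact ⟨trivial, ex, ey, ez⟩
  · rintro ⟨P, hne, hb⟩
    obtain ⟨m0, hm0⟩ := Multiset.exists_mem_of_ne_zero hne
    have hFne : P.parts.toFinset.Nonempty := ⟨m0, Multiset.mem_toFinset.2 hm0⟩
    set a := P.parts.toFinset.min' hFne with hadef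
    have ha_mem : a ∈ P.parts := Multiset.mem_toFinset.1 (Finset.min'_mem _ hFne)
    have ha_min : ∀ b ∈ P.parts, a ≤ b := fun b hb' =>
      Finset.min'_le _ b (Multiset.mem_toFinset.2 hb')
    have hbound : ∀ b ∈ P.parts, b ≤ a + 2 := fun b hb' => hb b hb' a ha_mem
    have hparts : P.parts
        = tupMS (a, P.parts.count a, P.parts.count (a+1), P.parts.count (a+2)) := by
      ext m
      simp only [tupMS, Multiset.count_add, Multiset.count_replicate]
      by_cases h1 : a = m
      · rw [if_pos h1, if_neg (by omega), if_neg (by omega), add_zero, add_zero, ← h1]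
      by_cases h2 : a + 1 = m
      · rw [if_neg h1, if_pos h2, if_neg (by omega), zero_add, add_zero, ← h2]
      by_cases h3 : a + 2 = m
      · rw [if_neg h1, if_neg h2, if_pos h3, zero_add, zero_add, ← h3]
      · rw [if_neg h1, if_neg h2, if_neg h3, add_zero, add_zero]
        exact Multiset.count_eq_zero.2 (fun hmem => by
          have := ha_min m hmem
          have := hbound m hmem
          omega)
    have hcondq : bdCond n (a, P.parts.count a, P.parts.count (a+1), P.parts.count (a+2)) := by
      refine ⟨P.parts_pos ha_mem, Multiset.count_pos.2 ha_mem, ?_⟩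
      have := P.parts_sum
      rw [hparts, tupMS_sum] at this
      exact this
    refine ⟨⟨_, hcondq⟩, ?_⟩
    apply Subtype.ext
    apply Nat.Partition.ext
    exact hparts.symm

instance (n : ℕ) (q : ℕ × ℕ × ℕ × ℕ) : Decidable (bdCond n q) := by
  unfold bdCond; infer_instance

def bdSet (n : ℕ) : Finset (ℕ × ℕ × ℕ × ℕ) :=
  ((Finset.range (n+1)) ×ˢ (Finset.range (n+1)) ×ˢ (Finset.range (n+1)) ×ˢ
    (Finset.range (n+1))).filter (bdCond n)

lemma mem_bdSet {n : ℕ} {q : ℕ × ℕ × ℕ × ℕ} : q ∈ bdSet n ↔ bdCond n q := by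
  obtain ⟨a, x, y, z⟩ := q
  simp only [bdSet, Finset.mem_filter, Finset.mem_product, Finset.mem_range]
  constructor
  · tauto
  · rintro ⟨ha, hx, hs⟩
    refine ⟨⟨?_, ?_, ?_, ?_⟩, ha, hx, hs⟩ <;>
    · simp only [bdCond] at *
      have h1 : a ≤ a * x := Nat.le_mul_of_pos_right a (by omega)
      have h2 : x ≤ a * x := Nat.le_mul_of_pos_left x (by omega)
      have h3 : y ≤ (a + 1) * y := Nat.le_mul_of_pos_left y (by omega)
      have h4 : z ≤ (a + 2) * z := Nat.le_mul_of_pos_left z (by omega)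
      omega

lemma mem_bdSet' {n a x y z : ℕ} : (a, x, y, z) ∈ bdSet n ↔
    1 ≤ a ∧ 1 ≤ x ∧ a * x + (a + 1) * y + (a + 2) * z = n := mem_bdSet


/-- forward map for the recurrence: partitions counted by `bdSet (2k+1)` plus a `(k+2)`-element
set inject into `bdSet (2k+3)`. -/
def stepFwd (k : ℕ) : (ℕ × ℕ × ℕ × ℕ) ⊕ ℕ → ℕ × ℕ × ℕ × ℕ
  | Sum.inl (a, x, y, z) =>
      if 2 ≤ x then (a, x - 1, y, z + 1)
      else if 1 ≤ y then (a + 1, y, z + 1, 0)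
      else (a + 2, z + 1, 0, 0)
  | Sum.inr v => (1, 2 * (k + 1 - v) + 1, v, 0)

def stepBwd : ℕ × ℕ × ℕ × ℕ → (ℕ × ℕ × ℕ × ℕ) ⊕ ℕ
  | (A, X, Y, Z) =>
      if 1 ≤ Z then Sum.inl (A, X + 1, Y, Z - 1)
      else if A = 1 then Sum.inr Y
      else if 1 ≤ Y then Sum.inl (A - 1, 1, X, Y - 1)
      else Sum.inl (A - 2, 1, 0, X - 1)

lemma card_step (k : ℕ) : (bdSet (2*k+3)).card = (bdSet (2*k+1)).card + (k+2) := by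
  have key : ((bdSet (2*k+1)).disjSum (Finset.range (k+2))).card = (bdSet (2*k+3)).card := by
    apply Finset.card_nbij' (stepFwd k) stepBwd
    · -- hi : maps into bdSet (2k+3)
      rintro (⟨a, x, y, z⟩ | v) hs
      · rw [Finset.mem_coe, Finset.inl_mem_disjSum, mem_bdSet'] at hs
        obtain ⟨ha, hx, hsum⟩ := hs
        rw [Finset.mem_coe, mem_bdSet']
        simp only [stepFwd]
        split_ifs with h2 h1
        · -- x ≥ 2
          obtain ⟨w, rfl⟩ : ∃ w, x = w + 2 := ⟨x - 2, by omega⟩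
          have e0 : w + 2 - 1 = w + 1 := by omega
          rw [e0]
          refine ⟨by omega, by omega, ?_⟩
          ring_nf
          ring_nf at hsum
          omega
        · -- x = 1, y ≥ 1
          have hx1 : x = 1 := by omega
          subst hx1
          refine ⟨by omega, by omega, ?_⟩
          ring_nf
          ring_nf at hsum
          omega
        · -- x = 1, y = 0
          have hx1 : x = 1 := by omega
          have hy0 : y = 0 := by omega
          subst hx1; subst hy0
          refine ⟨by omega, by omega, ?_⟩
          ring_nf
          ring_nf at hsum
          omega
      · rw [Finset.mem_coe, Finset.inr_mem_disjSum, Finset.mem_range] at hs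
        simp only [stepFwd]
        rw [Finset.mem_coe, mem_bdSet']
        refine ⟨by omega, by omega, ?_⟩
        show 1 * (2 * (k + 1 - v) + 1) + (1 + 1) * v + (1 + 2) * 0 = 2 * k + 3
        omega
    · -- hj : maps into disjSum
      intro q hq
      obtain ⟨A, X, Y, Z⟩ := q
      rw [Finset.mem_coe, mem_bdSet'] at hq
      obtain ⟨hA, hX, hsum⟩ := hq
      simp only [stepBwd, Finset.mem_coe]
      split_ifs with hZ hA1 hY
      · -- Z ≥ 1
        obtain ⟨W, rfl⟩ : ∃ W, Z = W + 1 := ⟨Z - 1, by omega⟩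
        rw [Finset.inl_mem_disjSum, mem_bdSet']
        have e0 : W + 1 - 1 = W := by omega
        rw [e0]
        refine ⟨by omega, by omega, ?_⟩
        ring_nf
        ring_nf at hsum
        omega
      · -- Z = 0, A = 1
        subst hA1
        rw [Finset.inr_mem_disjSum, Finset.mem_range]
        have hZ0 : Z = 0 := by omega
        subst hZ0
        omega
      · -- Z = 0, A ≥ 2, Y ≥ 1
        have hZ0 : Z = 0 := by omega
        subst hZ0
        obtain ⟨B, rfl⟩ : ∃ B, A = B + 2 := ⟨A - 2, by omega⟩
        obtain ⟨W, rfl⟩ : ∃ W, Y = W + 1 := ⟨Y - 1, by omega⟩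
        rw [Finset.inl_mem_disjSum, mem_bdSet']
        have e0 : B + 2 - 1 = B + 1 := by omega
        have e0' : W + 1 - 1 = W := by omega
        rw [e0, e0']
        refine ⟨by omega, by omega, ?_⟩
        ring_nf
        ring_nf at hsum
        omega
      · -- Z = 0, A ≥ 2, Y = 0
        have hZ0 : Z = 0 := by omega
        have hY0 : Y = 0 := by omega
        subst hZ0; subst hY0
        have hA2 : A ≠ 2 := by
          intro h
          subst h
          ring_nf at hsum
          omega
        obtain ⟨B, rfl⟩ : ∃ B, A = B + 3 := ⟨A - 3, by omega⟩
        have hX1 : 1 ≤ X := by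
          rcases Nat.eq_zero_or_pos X with h | h
          · subst h
            ring_nf at hsum
            omega
          · exact h
        obtain ⟨W, rfl⟩ : ∃ W, X = W + 1 := ⟨X - 1, by omega⟩
        rw [Finset.inl_mem_disjSum, mem_bdSet']
        have e0 : B + 3 - 2 = B + 1 := by omega
        have e0' : W + 1 - 1 = W := by omega
        rw [e0, e0']
        refine ⟨by omega, by omega, ?_⟩
        ring_nf
        ring_nf at hsum
        omega
    · -- left_inv : stepBwd (stepFwd s) = s
      rintro (⟨a, x, y, z⟩ | v) hs
      · rw [Finset.mem_coe, Finset.inl_mem_disjSum, mem_bdSet'] at hs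
        obtain ⟨ha, hx, hsum⟩ := hs
        simp only [stepFwd]
        split_ifs with h2 h1
        · simp only [stepBwd]
          rw [if_pos (by omega)]
          have e1 : x - 1 + 1 = x := by omega
          have e2 : z + 1 - 1 = z := by omega
          rw [e1, e2]
        · simp only [stepBwd]
          rw [if_neg (by omega), if_neg (by omega), if_pos (by omega)]
          have e1 : a + 1 - 1 = a := by omega
          have e2 : z + 1 - 1 = z := by omega
          rw [e1, e2]
          have : x = 1 := by omega
          rw [this]
        · simp only [stepBwd]
          rw [if_neg (by omega), if_neg (by omega), if_neg (by omega)]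
          have e1 : a + 2 - 2 = a := by omega
          have e2 : z + 1 - 1 = z := by omega
          rw [e1, e2]
          have hx1 : x = 1 := by omega
          have hy0 : y = 0 := by omega
          rw [hx1, hy0]
      · simp only [stepFwd, stepBwd]
        simp
    · -- right_inv : stepFwd (stepBwd q) = q
      intro q hq
      obtain ⟨A, X, Y, Z⟩ := q
      rw [Finset.mem_coe, mem_bdSet'] at hq
      obtain ⟨hA, hX, hsum⟩ := hq
      simp only [stepBwd]
      split_ifs with hZ hA1 hY
      · simp only [stepFwd]
        rw [if_pos (by omega)]
        have e1 : X + 1 - 1 = X := by omega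
        have e2 : Z - 1 + 1 = Z := by omega
        rw [e1, e2]
      · -- A = 1, Z = 0
        subst hA1
        simp only [stepFwd]
        have hZ0 : Z = 0 := by omega
        subst hZ0
        ring_nf at hsum
        have hXv : X = 2 * (k + 1 - Y) + 1 := by omega
        rw [← hXv]
      · -- A ≥ 2, Y ≥ 1, Z = 0
        simp only [stepFwd]
        rw [if_neg (by omega), if_pos (by omega)]
        have hZ0 : Z = 0 := by omega
        have e1 : A - 1 + 1 = A := by omega
        have e2 : Y - 1 + 1 = Y := by omega
        rw [e1, e2, hZ0]
      · -- A ≥ 2, Y = 0, Z = 0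
        simp only [stepFwd]
        rw [if_neg (by omega), if_neg (by omega)]
        have hZ0 : Z = 0 := by omega
        have hY0 : Y = 0 := by omega
        have hA2 : A ≠ 2 := by
          intro h
          subst h
          ring_nf at hsum
          omega
        have e1 : A - 2 + 2 = A := by omega
        have hX1 : 1 ≤ X := by omega
        have e2 : X - 1 + 1 = X := by omega
        rw [e1, e2, hZ0, hY0]
  rw [Finset.card_disjSum, Finset.card_range] at key
  omega

lemma bdc_eq_card (n : ℕ) : boundedDiffCount n 2 = (bdSet n).card := by
  rw [card_bdSet_eq, ← Nat.card_eq_finsetCard]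
  exact Nat.card_congr (Equiv.subtypeEquivRight (fun q => mem_bdSet.symm))

lemma bdSet_one : (bdSet 1).card = 1 := by decide

/-- `p(2k+1, 2) = C(k+2, 2)`. -/
theorem bounded_diff_two_odd (k : ℕ) :
    boundedDiffCount (2 * k + 1) 2 = (k + 2).choose 2 := by
  induction k with
  | zero => simp [bdc_eq_card, bdSet_one]
  | succ k ih =>
    have h1 : 2 * (k + 1) + 1 = 2 * k + 3 := by omega
    rw [bdc_eq_card, h1, card_step, ← bdc_eq_card, ih]
    have h2 : k + 1 + 2 = (k + 2) + 1 := by omega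
    rw [h2, Nat.choose_succ_succ (k + 2) 1, Nat.choose_one_right,
      show Nat.succ 1 = 2 from rfl]
    omega
end

section
/- Fix an integer t ≥ 1. For every integer m ≥ 1, the half-open simplicial cone C_m admits the inequality description C_m = { x ∈ ℝ^{t+1} : x_0 ≥ x_1 ≥ … ≥ x_{t−1} ≥ 0, ⟨u_{m−1}, x⟩ ≥ 0, and ⟨u_m, x⟩ < 0 }. -/
/-- The generator `v_i ∈ ℝ^{t+1}`: coordinates `0,…,(i-1) mod t` equal `1`, the remaining
coordinates among `0,…,t-1` equal `0`, and the last coordinate equals `((i-1) div t)·t`. -/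
noncomputable def geneV (t : ℕ) (i : ℕ) : Fin (t + 1) → ℝ := fun l =>
  if (l : ℕ) = t then (((i - 1) / t) * t : ℕ)
  else if (l : ℕ) ≤ (i - 1) % t then 1 else 0

/-- The half-open simplicial cone `C_m`, generated by `v_m, …, v_{m+t}` with the facet
opposite the first generator open. -/
noncomputable def coneC (t : ℕ) (m : ℕ) : Set (Fin (t + 1) → ℝ) :=
  { x | ∃ α : Fin (t + 1) → ℝ, 0 < α 0 ∧ (∀ i, 0 ≤ α i) ∧
      x = ∑ i : Fin (t + 1), α i • geneV t (m + (i : ℕ)) }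

/-- The normal vector `u_l = -((l div t)+1)·t·e₀ + t·e_{l mod t} + e_t`. -/
noncomputable def normalU (t : ℕ) (l : ℕ) : Fin (t + 1) → ℝ := fun j =>
  (if (j : ℕ) = 0 then -(((l / t + 1) * t : ℕ) : ℝ) else 0)
    + (if (j : ℕ) = l % t then (t : ℝ) else 0)
    + (if (j : ℕ) = t then 1 else 0)

/-- Standard inner product on `ℝ^{t+1}`. -/
noncomputable def sprod {n : ℕ} (u x : Fin n → ℝ) : ℝ := ∑ j, u j * x j

open Finset

noncomputable def yy (t : ℕ) (x : Fin (t + 1) → ℝ) : ℕ → ℝ :=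
  fun j => if h : j < t then x ⟨j, by omega⟩ else 0

lemma aux_mod (t l i : ℕ) : (l + i) % t = (l % t + i) % t := by
  rw [Nat.add_mod, Nat.add_mod (l % t) i, Nat.mod_mod_of_dvd l (dvd_refl t)]

lemma aux_div (t l i : ℕ) (ht : 0 < t) : (l + i) / t = l / t + (l % t + i) / t := by
  conv_lhs => rw [← Nat.div_add_mod l t, add_assoc]
  rw [Nat.mul_add_div ht]

lemma sum_ite_coord {n : ℕ} (c : ℕ) (hc : c < n) (a : ℝ) (x : Fin n → ℝ) :
    ∑ j : Fin n, (if (j : ℕ) = c then a else 0) * x j = a * x ⟨c, hc⟩ := by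
  rw [Finset.sum_eq_single (⟨c, hc⟩ : Fin n)]
  · simp
  · intro b _ hb
    rw [if_neg, zero_mul]
    simpa [Fin.ext_iff] using hb
  · simp

lemma sprod_expand (t : ℕ) (ht : 0 < t) (l : ℕ) (x : Fin (t + 1) → ℝ) :
    sprod (normalU t l) x
      = -(((l / t + 1) * t : ℕ) : ℝ) * yy t x 0 + (t : ℝ) * yy t x (l % t)
        + x ⟨t, by omega⟩ := by
  have hmt : l % t < t := Nat.mod_lt l ht
  unfold sprod normalU
  simp only [add_mul]
  rw [Finset.sum_add_distrib, Finset.sum_add_distrib,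
    sum_ite_coord 0 (by omega), sum_ite_coord (l % t) (by omega), sum_ite_coord t (by omega)]
  simp only [yy, dif_pos ht, dif_pos hmt, one_mul]

lemma geneV_coord (t i : ℕ) (j : Fin (t + 1)) (hc : (j : ℕ) < t) :
    geneV t i j = if (j : ℕ) ≤ (i - 1) % t then 1 else 0 := by
  rw [geneV]
  rw [if_neg (by omega)]

lemma geneV_last (t i : ℕ) (j : Fin (t + 1)) (hc : (j : ℕ) = t) :
    geneV t i j = (((i - 1) / t * t : ℕ) : ℝ) := by
  rw [geneV, if_pos hc]

lemma yy_geneV_zero (t : ℕ) (ht : 0 < t) (k : ℕ) : yy t (geneV t k) 0 = 1 := by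
  rw [yy]
  rw [dif_pos ht, geneV_coord t k _ (by simpa using ht)]
  simp

lemma yy_geneV (t : ℕ) (ht : 0 < t) (k c : ℕ) (hc : c < t) :
    yy t (geneV t k) c = if c ≤ (k - 1) % t then 1 else 0 := by
  rw [yy, dif_pos hc, geneV_coord t k _ (by simpa using hc)]

lemma sprodA (t : ℕ) (ht : 0 < t) (l i : ℕ) (hi : i ≤ t) :
    sprod (normalU t l) (geneV t (l + 1 + i)) = if i = t then (t : ℝ) else 0 := by
  have hmt : l % t < t := Nat.mod_lt l ht
  have e1 : l + 1 + i - 1 = l + i := by omega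
  rw [sprod_expand t ht, yy_geneV_zero t ht, yy_geneV t ht _ _ hmt,
    geneV_last t _ _ (by simp), e1]
  rcases Nat.lt_or_ge (l % t + i) t with h | h
  · have hit : i ≠ t := by omega
    have hm : (l + i) % t = l % t + i := by rw [aux_mod]; exact Nat.mod_eq_of_lt h
    have hd : (l + i) / t = l / t := by
      rw [aux_div t l i ht, Nat.div_eq_of_lt h, Nat.add_zero]
    rw [hm, hd, if_pos (by omega), if_neg hit]
    push_cast
    ring
  · have h2 : l % t + i < 2 * t := by omega
    have hm : (l + i) % t = l % t + i - t := by
      rw [aux_mod, Nat.mod_eq_sub_mod h, Nat.mod_eq_of_lt (by omega)]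
    have hd : (l + i) / t = l / t + 1 := by
      have h9 : l % t + i - t < t := by omega
      rw [aux_div t l i ht, Nat.div_eq_sub_div ht h, Nat.div_eq_of_lt h9]
    rw [hm, hd]
    by_cases hit : i = t
    · subst hit
      rw [if_pos (by omega), if_pos rfl]
      push_cast
      ring
    · rw [if_neg (by omega), if_neg hit]
      push_cast
      ring

lemma sprodB (t : ℕ) (ht : 0 < t) (l i : ℕ) (hi : i ≤ t) :
    sprod (normalU t (l + 1)) (geneV t (l + 1 + i)) = if i = 0 then -(t : ℝ) else 0 := by
  have hmt : l % t < t := Nat.mod_lt l ht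
  have hmt1 : (l + 1) % t < t := Nat.mod_lt (l + 1) ht
  have e1 : l + 1 + i - 1 = l + i := by omega
  rw [sprod_expand t ht, yy_geneV_zero t ht, yy_geneV t ht _ _ hmt1,
    geneV_last t _ _ (by simp), e1]
  have hm1 : (l + 1) % t = (l % t + 1) % t := aux_mod t l 1
  have hd1 : (l + 1) / t = l / t + (l % t + 1) / t := aux_div t l 1 ht
  rcases Nat.lt_or_ge (l % t + 1) t with hr | hr
  · -- (l+1)%t = l%t+1, (l+1)/t = l/t
    have e2 : (l + 1) % t = l % t + 1 := by rw [hm1]; exact Nat.mod_eq_of_lt hr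
    have e3 : (l + 1) / t = l / t := by rw [hd1, Nat.div_eq_of_lt hr, Nat.add_zero]
    rw [e2, e3]
    rcases Nat.lt_or_ge (l % t + i) t with h | h
    · have hm : (l + i) % t = l % t + i := by rw [aux_mod]; exact Nat.mod_eq_of_lt h
      have hd : (l + i) / t = l / t := by
        rw [aux_div t l i ht, Nat.div_eq_of_lt h, Nat.add_zero]
      rw [hm, hd]
      by_cases hi0 : i = 0
      · subst hi0; rw [if_neg (by omega), if_pos rfl]; push_cast; ring
      · rw [if_pos (by omega), if_neg hi0]; push_cast; ring
    · have hi0 : i ≠ 0 := by omega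
      have hm : (l + i) % t = l % t + i - t := by
        rw [aux_mod, Nat.mod_eq_sub_mod h, Nat.mod_eq_of_lt (by omega)]
      have hd : (l + i) / t = l / t + 1 := by
        have h9 : l % t + i - t < t := by omega
        rw [aux_div t l i ht, Nat.div_eq_sub_div ht h, Nat.div_eq_of_lt h9]
      rw [hm, hd, if_neg (by omega), if_neg hi0]
      push_cast
      ring
  · -- l%t = t-1 : (l+1)%t = 0, (l+1)/t = l/t+1
    have hr' : l % t + 1 = t := by omega
    have e2 : (l + 1) % t = 0 := by rw [hm1, hr', Nat.mod_self]
    have e3 : (l + 1) / t = l / t + 1 := by rw [hd1, hr', Nat.div_self ht]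
    rw [e2, e3]
    by_cases hi0 : i = 0
    · subst hi0
      have hm : (l + 0) % t = l % t := by rw [Nat.add_zero]
      have hd : (l + 0) / t = l / t := by rw [Nat.add_zero]
      rw [hm, hd, if_pos (by omega), if_pos rfl]
      push_cast
      ring
    · have h : t ≤ l % t + i := by omega
      have hm : (l + i) % t = l % t + i - t := by
        have h9 : l % t + i - t < t := by omega
        rw [aux_mod, Nat.mod_eq_sub_mod h, Nat.mod_eq_of_lt h9]
      have hd : (l + i) / t = l / t + 1 := by
        have h9 : l % t + i - t < t := by omega
        rw [aux_div t l i ht, Nat.div_eq_sub_div ht h, Nat.div_eq_of_lt h9]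
      rw [hm, hd, if_pos (by omega), if_neg hi0]
      push_cast
      ring

lemma sprod_sum {n : ℕ} (u : Fin n → ℝ) (α : Fin n → ℝ) (v : Fin n → Fin n → ℝ) :
    sprod u (∑ i, α i • v i) = ∑ i, α i * sprod u (v i) := by
  unfold sprod
  simp only [Finset.sum_apply, Pi.smul_apply, smul_eq_mul, Finset.mul_sum]
  rw [Finset.sum_comm]
  apply Finset.sum_congr rfl
  intros
  apply Finset.sum_congr rfl
  intros
  ring



lemma tele (y : ℕ → ℝ) (c : ℕ) : ∀ n, c ≤ n →
    ∑ k ∈ range n, (if c ≤ k then y k - y (k + 1) else 0) = y c - y n := by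
  intro n
  induction n with
  | zero => intro h; simp [Nat.le_zero.mp h]
  | succ n ih =>
    intro h
    rcases Nat.lt_or_ge c (n+1) with h1 | h1
    · rw [sum_range_succ, ih (by omega), if_pos (by omega)]; ring
    · have hc : c = n + 1 := by omega
      subst hc
      rw [sum_range_succ, if_neg (by omega)]
      rw [Finset.sum_eq_zero (fun k hk => by rw [if_neg]; simp at hk; omega)]
      ring

lemma tele2 (y : ℕ → ℝ) (r : ℕ) : ∀ n, r ≤ n →
    ∑ k ∈ range n, (if k < r then y k - y (k + 1) else 0) = y 0 - y r := by
  intro n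
  induction n with
  | zero => intro h; rw [show r = 0 by omega]; simp
  | succ n ih =>
    intro h
    rcases Nat.lt_or_ge r (n+1) with h1 | h1
    · rw [sum_range_succ, ih (by omega), if_neg (by omega)]; ring
    · have hr : r = n + 1 := by omega
      subst hr
      rw [sum_range_succ, if_pos (by omega)]
      have h2 : ∑ k ∈ range n, (if k < n + 1 then y k - y (k + 1) else 0)
          = ∑ k ∈ range n, (y k - y (k+1)) := by
        apply Finset.sum_congr rfl; intro k hk; rw [if_pos]; simp at hk; omega
      rw [h2, Finset.sum_range_sub' y]
      ring

lemma sum_shift (g : ℕ → ℝ) (t : ℕ) : ∀ s, ∑ i ∈ range t, g ((s + i) % t) = ∑ i ∈ range t, g (i % t) := by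
  intro s
  induction s with
  | zero => simp
  | succ s ih =>
    rw [← ih]
    rcases Nat.eq_zero_or_pos t with ht | ht
    · subst ht; simp
    obtain ⟨u, hu⟩ : ∃ u, t = u + 1 := ⟨t - 1, by omega⟩
    subst hu
    rw [sum_range_succ, sum_range_succ']
    have h2 : ∑ i ∈ range u, g ((s + 1 + i) % (u + 1)) = ∑ i ∈ range u, g ((s + (i + 1)) % (u + 1)) := by
      apply Finset.sum_congr rfl; intro k _; congr 2; omega
    rw [h2]
    have h1 : (s + 1 + u) % (u + 1) = (s + 0) % (u + 1) := by
      have h3 : s + 1 + u = s + (u + 1) := by omega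
      rw [h3, Nat.add_mod_right]; simp
    rw [h1]

lemma mid_sum (g : ℕ → ℝ) (t r : ℕ) (ht : 0 < t) (hr : r < t) :
    ∑ i ∈ range (t - 1), g ((r + (i + 1)) % t) = (∑ k ∈ range t, g k) - g r := by
  have h0 : ∑ i ∈ range t, g ((r + 1 + i) % t) = ∑ i ∈ range t, g (i % t) := sum_shift g t (r+1)
  have h1 : ∑ i ∈ range t, g (i % t) = ∑ i ∈ range t, g i := by
    apply Finset.sum_congr rfl; intro k hk; simp at hk; rw [Nat.mod_eq_of_lt hk]
  obtain ⟨u, hu⟩ : ∃ u, t = u + 1 := ⟨t - 1, by omega⟩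
  subst hu
  rw [sum_range_succ] at h0
  have h2 : (r + 1 + u) % (u + 1) = r := by
    have h3 : r + 1 + u = r + (u + 1) := by omega
    rw [h3, Nat.add_mod_right, Nat.mod_eq_of_lt hr]
  rw [h2, h1] at h0
  have h4 : ∑ i ∈ range ((u+1) - 1), g ((r + (i + 1)) % (u+1)) = ∑ i ∈ range u, g ((r + 1 + i) % (u + 1)) := by
    rw [Nat.add_sub_cancel]
    apply Finset.sum_congr rfl; intro k _; congr 2; omega
  rw [h4]
  linarith

lemma split3 (F : ℕ → ℝ) (t : ℕ) (ht : 0 < t) :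
    ∑ i ∈ range (t + 1), F i = F 0 + (∑ i ∈ range (t - 1), F (i + 1)) + F t := by
  obtain ⟨s, rfl⟩ : ∃ s, t = s + 1 := ⟨t - 1, by omega⟩
  rw [sum_range_succ, sum_range_succ', Nat.add_sub_cancel]
  ring

noncomputable def coefA (t l : ℕ) (x : Fin (t + 1) → ℝ) : ℕ → ℝ := fun i =>
  if i = 0 then -sprod (normalU t (l + 1)) x / t
  else if i = t then sprod (normalU t l) x / t
  else yy t x ((l % t + i) % t) - yy t x ((l % t + i) % t + 1)

lemma coefA_zero (t l : ℕ) (x : Fin (t + 1) → ℝ) :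
    coefA t l x 0 = -sprod (normalU t (l + 1)) x / t := by simp [coefA]

lemma coefA_top (t l : ℕ) (ht : 0 < t) (x : Fin (t + 1) → ℝ) :
    coefA t l x t = sprod (normalU t l) x / t := by
  rw [coefA]
  rw [if_neg (by omega), if_pos rfl]

lemma coefA_mid (t l : ℕ) (x : Fin (t + 1) → ℝ) (i : ℕ) (h1 : 1 ≤ i) (h2 : i < t) :
    coefA t l x i = yy t x ((l % t + i) % t) - yy t x ((l % t + i) % t + 1) := by
  rw [coefA, if_neg (by omega), if_neg (by omega)]

lemma keyF1 (t : ℕ) (ht : 0 < t) (l : ℕ) (x : Fin (t + 1) → ℝ) :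
    sprod (normalU t l) x - sprod (normalU t (l + 1)) x
      = t * (yy t x (l % t) - yy t x (l % t + 1)) := by
  have hr : l % t < t := Nat.mod_lt l ht
  have hm1 : (l + 1) % t = (l % t + 1) % t := aux_mod t l 1
  have hd1 : (l + 1) / t = l / t + (l % t + 1) / t := aux_div t l 1 ht
  rw [sprod_expand t ht l x, sprod_expand t ht (l + 1) x]
  rcases Nat.lt_or_ge (l % t + 1) t with h | h
  · have e2 : (l + 1) % t = l % t + 1 := by rw [hm1]; exact Nat.mod_eq_of_lt h
    have e3 : (l + 1) / t = l / t := by rw [hd1, Nat.div_eq_of_lt h, Nat.add_zero]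
    rw [e2, e3]
    push_cast
    ring
  · have hr' : l % t + 1 = t := by omega
    have e2 : (l + 1) % t = 0 := by rw [hm1, hr', Nat.mod_self]
    have e3 : (l + 1) / t = l / t + 1 := by rw [hd1, hr', Nat.div_self ht]
    have e4 : yy t x (l % t + 1) = 0 := by rw [yy, dif_neg (by omega)]
    rw [e2, e3, e4]
    push_cast
    ring

lemma coefA_sum_eq (t : ℕ) (ht : 0 < t) (l : ℕ) (x : Fin (t + 1) → ℝ) (hAsum :
      coefA t l x 0 + coefA t l x t = yy t x (l % t) - yy t x (l % t + 1)) (c : ℕ) (hc : c < t) :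
    ∑ i ∈ range (t + 1), coefA t l x i * (if c ≤ (l % t + i) % t then 1 else 0)
      = yy t x c := by
  have hr : l % t < t := Nat.mod_lt l ht
  set y := yy t x with hy
  set g : ℕ → ℝ := fun k => (y k - y (k + 1)) * (if c ≤ k then 1 else 0) with hg
  rw [split3 _ t ht]
  have e0 : (l % t + 0) % t = l % t := by rw [Nat.add_zero, Nat.mod_eq_of_lt hr]
  have et : (l % t + t) % t = l % t := by rw [Nat.add_mod_right, Nat.mod_eq_of_lt hr]
  have emid : ∑ i ∈ range (t - 1), coefA t l x (i + 1) * (if c ≤ (l % t + (i + 1)) % t then 1 else 0)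
      = ∑ i ∈ range (t - 1), g ((l % t + (i + 1)) % t) := by
    apply Finset.sum_congr rfl
    intro i hi
    rw [Finset.mem_range] at hi
    rw [coefA_mid t l x (i + 1) (by omega) (by omega)]
  have htele : ∑ k ∈ range t, g k = y c - y t := by
    have : ∑ k ∈ range t, g k = ∑ k ∈ range t, (if c ≤ k then y k - y (k + 1) else 0) := by
      apply Finset.sum_congr rfl
      intro k _
      simp only [hg]
      by_cases h : c ≤ k
      · rw [if_pos h, if_pos h, mul_one]
      · rw [if_neg h, if_neg h, mul_zero]
    rw [this, tele y c t (by omega)]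
  have hyt : y t = 0 := by rw [hy, yy, dif_neg (by omega)]
  rw [emid, mid_sum g t (l % t) ht hr, htele, hyt, e0, et]
  simp only [hg]
  by_cases h : c ≤ l % t
  · simp only [if_pos h, mul_one]
    linarith [hAsum]
  · simp only [if_neg h, mul_zero]
    linarith

lemma coefA_sum_last (t : ℕ) (ht : 0 < t) (l : ℕ) (x : Fin (t + 1) → ℝ)
    (hAsum : coefA t l x 0 + coefA t l x t = yy t x (l % t) - yy t x (l % t + 1)) :
    ∑ i ∈ range (t + 1), coefA t l x i * (((l + i) / t * t : ℕ) : ℝ)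
      = x ⟨t, by omega⟩ := by
  have hr : l % t < t := Nat.mod_lt l ht
  have hv : ∀ i ∈ range (t + 1), coefA t l x i * (((l + i) / t * t : ℕ) : ℝ)
      = ((l / t * t : ℕ) : ℝ) * coefA t l x i
        + (t : ℝ) * (coefA t l x i * (if t ≤ l % t + i then 1 else 0)) := by
    intro i hi
    rw [Finset.mem_range] at hi
    have hdiv : (l + i) / t = l / t + (if t ≤ l % t + i then 1 else 0) := by
      rw [aux_div t l i ht]
      congr 1
      rcases Nat.lt_or_ge (l % t + i) t with h | h
      · rw [Nat.div_eq_of_lt h, if_neg (by omega)]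
      · have h9 : l % t + i - t < t := by omega
        rw [Nat.div_eq_sub_div ht h, Nat.div_eq_of_lt h9, if_pos h]
    rw [hdiv]
    by_cases h : t ≤ l % t + i
    · simp only [if_pos h]; push_cast; ring
    · simp only [if_neg h]; push_cast; ring
  rw [Finset.sum_congr rfl hv, Finset.sum_add_distrib, ← Finset.mul_sum, ← Finset.mul_sum]
  have hSall : ∑ i ∈ range (t + 1), coefA t l x i = yy t x 0 := by
    have h0 := coefA_sum_eq t ht l x hAsum 0 ht
    simpa [Nat.zero_le] using h0
  have hShi : ∑ i ∈ range (t + 1), coefA t l x i * (if t ≤ l % t + i then 1 else 0)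
      = coefA t l x t + (yy t x 0 - yy t x (l % t)) := by
    set y := yy t x with hy
    set g2 : ℕ → ℝ := fun k => (y k - y (k + 1)) * (if k < l % t then 1 else 0) with hg2
    rw [split3 _ t ht]
    have emid : ∀ i ∈ range (t - 1),
        coefA t l x (i + 1) * (if t ≤ l % t + (i + 1) then 1 else 0)
          = g2 ((l % t + (i + 1)) % t) := by
      intro i hi
      rw [Finset.mem_range] at hi
      rw [coefA_mid t l x (i + 1) (by omega) (by omega)]
      simp only [hg2]
      rcases Nat.lt_or_ge (l % t + (i + 1)) t with h | h
      · have hk : (l % t + (i + 1)) % t = l % t + (i + 1) := Nat.mod_eq_of_lt h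
        rw [hk, if_neg (by omega), if_neg (by omega)]
      · have h9 : l % t + (i + 1) - t < t := by omega
        have hk : (l % t + (i + 1)) % t = l % t + (i + 1) - t := by
          rw [Nat.mod_eq_sub_mod h, Nat.mod_eq_of_lt h9]
        rw [hk, if_pos (by omega), if_pos (by omega)]
    rw [Finset.sum_congr rfl emid, mid_sum g2 t (l % t) ht hr]
    have htele : ∑ k ∈ range t, g2 k = y 0 - y (l % t) := by
      have h1 : ∑ k ∈ range t, g2 k
          = ∑ k ∈ range t, (if k < l % t then y k - y (k + 1) else 0) := by
        apply Finset.sum_congr rfl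
        intro k _
        simp only [hg2]
        by_cases h : k < l % t
        · rw [if_pos h, if_pos h, mul_one]
        · rw [if_neg h, if_neg h, mul_zero]
      rw [h1, tele2 y (l % t) t (by omega)]
    have hg2r : g2 (l % t) = 0 := by simp only [hg2]; rw [if_neg (by omega), mul_zero]
    rw [htele, hg2r, if_neg (by omega), if_pos (by omega)]
    ring
  rw [hSall, hShi, coefA_top t l ht x, sprod_expand t ht l x]
  have ht' : (t : ℝ) ≠ 0 := by positivity
  push_cast
  field_simp
  ring

lemma geneV_mono (t k : ℕ) (i j : Fin (t + 1)) (hij : i ≤ j) (hj : (j : ℕ) < t) :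
    geneV t k j ≤ geneV t k i := by
  have hij' : (i : ℕ) ≤ (j : ℕ) := hij
  have hi : (i : ℕ) < t := by omega
  rw [geneV_coord t k i hi, geneV_coord t k j hj]
  split_ifs with h1 h2 h3
  · norm_num
  · exact absurd (le_trans hij' h1) h2
  · norm_num
  · norm_num

lemma geneV_nonneg (t k : ℕ) (i : Fin (t + 1)) (hi : (i : ℕ) < t) :
    0 ≤ geneV t k i := by
  rw [geneV_coord t k i hi]
  split_ifs <;> norm_num

lemma sum_pick {n : ℕ} (c : ℕ) (hc : c < n) (f : Fin n → ℝ) (a : ℝ) :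
    ∑ i : Fin n, f i * (if (i : ℕ) = c then a else 0) = f ⟨c, hc⟩ * a := by
  rw [Finset.sum_eq_single (⟨c, hc⟩ : Fin n)]
  · simp
  · intro b _ hb
    have hbc : ¬((b : ℕ) = c) := fun h => hb (Fin.ext h)
    rw [if_neg hbc, mul_zero]
  · simp

/-- Inequality description of `C_m`:
`C_m = {x : x₀ ≥ x₁ ≥ … ≥ x_{t-1} ≥ 0, ⟨u_{m-1},x⟩ ≥ 0, ⟨u_m,x⟩ < 0}`. -/
theorem cone_inequality_description (t : ℕ) (ht : 1 ≤ t) (m : ℕ) (hm : 1 ≤ m) :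
    coneC t m
      = { x : Fin (t + 1) → ℝ |
          (∀ i j : Fin (t + 1), i ≤ j → (j : ℕ) < t → x j ≤ x i) ∧
          (∀ i : Fin (t + 1), (i : ℕ) < t → 0 ≤ x i) ∧
          0 ≤ sprod (normalU t (m - 1)) x ∧
          sprod (normalU t m) x < 0 } := by

  obtain ⟨l, rfl⟩ : ∃ l, m = l + 1 := ⟨m - 1, by omega⟩
  have ht0 : 0 < t := ht
  have hts : (0 : ℝ) < t := by exact_mod_cast ht0
  ext x
  simp only [coneC, Set.mem_setOf_eq, Nat.add_sub_cancel]
  constructor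
  · rintro ⟨α, hα0, hαnn, rfl⟩
    have hcoord : ∀ c : Fin (t + 1),
        (∑ i : Fin (t + 1), α i • geneV t (l + 1 + (i : ℕ))) c
          = ∑ i : Fin (t + 1), α i * geneV t (l + 1 + (i : ℕ)) c := by
      intro c
      simp [Finset.sum_apply]
    refine ⟨?_, ?_, ?_, ?_⟩
    · intro i j hij hj
      rw [hcoord, hcoord]
      apply Finset.sum_le_sum
      intro k _
      exact mul_le_mul_of_nonneg_left (geneV_mono t _ i j hij hj) (hαnn k)
    · intro i hi
      rw [hcoord]
      apply Finset.sum_nonneg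
      intro k _
      exact mul_nonneg (hαnn k) (geneV_nonneg t _ i hi)
    · rw [sprod_sum]
      have h1 : ∀ i : Fin (t + 1),
          α i * sprod (normalU t l) (geneV t (l + 1 + (i : ℕ)))
            = α i * (if (i : ℕ) = t then (t : ℝ) else 0) := fun i => by
        rw [sprodA t ht0 l i (by omega)]
      rw [Finset.sum_congr rfl (fun i _ => h1 i), sum_pick t (by omega) α (t : ℝ)]
      exact mul_nonneg (hαnn _) (le_of_lt hts)
    · rw [sprod_sum]
      have h1 : ∀ i : Fin (t + 1),
          α i * sprod (normalU t (l + 1)) (geneV t (l + 1 + (i : ℕ)))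
            = α i * (if (i : ℕ) = 0 then -(t : ℝ) else 0) := fun i => by
        rw [sprodB t ht0 l i (by omega)]
      rw [Finset.sum_congr rfl (fun i _ => h1 i), sum_pick 0 (by omega) α (-(t : ℝ))]
      have h2 : (⟨0, by omega⟩ : Fin (t + 1)) = 0 := rfl
      rw [h2]
      exact mul_neg_of_pos_of_neg hα0 (by linarith)
  · rintro ⟨hmono, hnn, hge, hlt⟩
    have hr : l % t < t := Nat.mod_lt l ht0
    have hAsum : coefA t l x 0 + coefA t l x t = yy t x (l % t) - yy t x (l % t + 1) := by
      rw [coefA_zero, coefA_top t l ht0 x, ← add_div]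
      have hkey := keyF1 t ht0 l x
      have h5 : -sprod (normalU t (l + 1)) x + sprod (normalU t l) x
          = (t : ℝ) * (yy t x (l % t) - yy t x (l % t + 1)) := by linarith
      rw [h5, mul_div_cancel_left₀ _ (ne_of_gt hts)]
    have hy_succ : ∀ k, k < t → yy t x (k + 1) ≤ yy t x k := by
      intro k hk
      by_cases h : k + 1 < t
      · simp only [yy]
        rw [dif_pos hk, dif_pos h]
        exact hmono ⟨k, by omega⟩ ⟨k + 1, by omega⟩ (by simp [Fin.mk_le_mk]) (by simpa using h)
      · simp only [yy]
        rw [dif_pos hk, dif_neg h]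
        exact hnn ⟨k, by omega⟩ (by simpa using hk)
    refine ⟨fun i => coefA t l x (i : ℕ), ?_, ?_, ?_⟩
    · show 0 < coefA t l x ((0 : Fin (t + 1)) : ℕ)
      have h0 : ((0 : Fin (t + 1)) : ℕ) = 0 := rfl
      rw [h0, coefA_zero]
      apply div_pos (by linarith) hts
    · intro i
      show 0 ≤ coefA t l x (i : ℕ)
      by_cases hi0 : (i : ℕ) = 0
      · rw [hi0, coefA_zero]
        apply le_of_lt (div_pos (by linarith) hts)
      · by_cases hit : (i : ℕ) = t
        · rw [hit, coefA_top t l ht0 x]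
          exact div_nonneg hge (le_of_lt hts)
        · have hi1 : 1 ≤ (i : ℕ) := by omega
          have hi2 : (i : ℕ) < t := by omega
          rw [coefA_mid t l x (i : ℕ) hi1 hi2]
          have hk : (l % t + (i : ℕ)) % t < t := Nat.mod_lt _ ht0
          linarith [hy_succ _ hk]
    · show x = ∑ i : Fin (t + 1), coefA t l x (i : ℕ) • geneV t (l + 1 + (i : ℕ))
      funext c
      have hsum : (∑ i : Fin (t + 1), coefA t l x (i : ℕ) • geneV t (l + 1 + (i : ℕ))) c
          = ∑ i ∈ range (t + 1), coefA t l x i * geneV t (l + 1 + i) c := by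
        simp only [Finset.sum_apply, Pi.smul_apply, smul_eq_mul]
        exact Fin.sum_univ_eq_sum_range (fun i => coefA t l x i * geneV t (l + 1 + i) c) (t + 1)
      rw [hsum]
      rcases Nat.lt_or_ge (c : ℕ) t with hc | hc
      · have hcongr : ∀ i ∈ range (t + 1), coefA t l x i * geneV t (l + 1 + i) c
            = coefA t l x i * (if (c : ℕ) ≤ (l % t + i) % t then 1 else 0) := by
          intro i _
          rw [geneV_coord t (l + 1 + i) c hc, show l + 1 + i - 1 = l + i from by omega,
            aux_mod t l i]
        rw [Finset.sum_congr rfl hcongr, coefA_sum_eq t ht0 l x hAsum (c : ℕ) hc]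
        rw [yy]
        rw [dif_pos hc, Fin.eta]
      · have hct : (c : ℕ) = t := by omega
        have hcongr : ∀ i ∈ range (t + 1), coefA t l x i * geneV t (l + 1 + i) c
            = coefA t l x i * (((l + i) / t * t : ℕ) : ℝ) := by
          intro i _
          rw [geneV_last t (l + 1 + i) c hct, show l + 1 + i - 1 = l + i from by omega]
        rw [Finset.sum_congr rfl hcongr, coefA_sum_last t ht0 l x hAsum]
        exact congrArg x (Fin.ext hct)
end

section
/- Fix an integer t ≥ 1. Then ⋃_{m≥1} C_m = { x ∈ ℝ^{t+1} : x_0 ≥ x_1 ≥ … ≥ x_{t−1} ≥ 0 and x_t ≥ 0 } \ { x ∈ ℝ^{t+1} : x_0 = x_1 = … = x_{t−1} = 0 and x_t ≥ 0 }; that is, the half-open cones C_m tile the simplicial cone { x : x_0 ≥ … ≥ x_{t−1} ≥ 0, x_t ≥ 0 } with the extreme ray along the last coordinate axis removed. -/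
open Finset

lemma coneC_forward (t : ℕ) (ht : 1 ≤ t) (m : ℕ) (hm : 1 ≤ m) (x : Fin (t+1) → ℝ)
    (hx : x ∈ coneC t m) :
    ((∀ i j : Fin (t + 1), i ≤ j → (j : ℕ) < t → x j ≤ x i) ∧
            (∀ i : Fin (t + 1), (i : ℕ) < t → 0 ≤ x i) ∧
            0 ≤ x (Fin.last t)) ∧
      ¬((∀ i : Fin (t + 1), (i : ℕ) < t → x i = 0) ∧ 0 ≤ x (Fin.last t)) := by
  obtain ⟨α, hα0, hαnn, hxe⟩ := hx
  have hval : ∀ (k : ℕ) (j : Fin (t+1)), x j = ∑ i : Fin (t+1), α i * geneV t (m + (i:ℕ)) j := by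
    intro k j
    rw [hxe]
    simp [Finset.sum_apply]
  have hgnn : ∀ (k : ℕ) (j : Fin (t+1)), 0 ≤ geneV t k j := by
    intro k j
    unfold geneV
    split
    · positivity
    · split <;> norm_num
  have hgmono : ∀ (k : ℕ) (i j : Fin (t+1)), i ≤ j → (j:ℕ) < t → geneV t k j ≤ geneV t k i := by
    intro k i j hij hjt
    unfold geneV
    have hi : (i:ℕ) ≠ t := by omega
    have hj : (j:ℕ) ≠ t := by omega
    rw [if_neg hi, if_neg hj]
    split <;> split <;> norm_num
    · rename_i h1 h2; exact absurd (le_trans (Fin.le_iff_val_le_val.1 hij) h1) h2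
  have hg0 : ∀ i : Fin (t+1), geneV t (m + (i:ℕ)) 0 = 1 := by
    intro i
    unfold geneV
    have h0 : ((0 : Fin (t+1)) : ℕ) = 0 := rfl
    rw [h0, if_neg (by omega), if_pos (by omega)]
  have hx0 : 0 < x 0 := by
    rw [hval 0 0]
    have : ∀ i : Fin (t+1), α i * geneV t (m + (i:ℕ)) 0 = α i := by
      intro i; rw [hg0]; ring
    rw [Finset.sum_congr rfl (fun i _ => this i)]
    calc (0:ℝ) < α 0 := hα0
    _ ≤ ∑ i : Fin (t+1), α i := Finset.single_le_sum (fun i _ => hαnn i) (Finset.mem_univ 0)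
  refine ⟨⟨?_, ?_, ?_⟩, ?_⟩
  · intro i j hij hjt
    rw [hval 0 i, hval 0 j]
    exact Finset.sum_le_sum (fun k _ => mul_le_mul_of_nonneg_left (hgmono _ i j hij hjt) (hαnn k))
  · intro i hit
    rw [hval 0 i]
    exact Finset.sum_nonneg (fun k _ => mul_nonneg (hαnn k) (hgnn _ i))
  · rw [hval 0 (Fin.last t)]
    exact Finset.sum_nonneg (fun k _ => mul_nonneg (hαnn k) (hgnn _ _))
  · rintro ⟨hz, -⟩
    have := hz 0 (by simp; omega)
    exact absurd this (ne_of_gt hx0)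

lemma telesc (X : ℕ → ℝ) (a b : ℕ) (h : a ≤ b) :
    ∑ s ∈ Finset.Ico a b, (X s - X (s+1)) = X a - X b := by
  induction b, h using Nat.le_induction with
  | base => simp
  | succ n hn ih => rw [Finset.sum_Ico_succ_top (by omega), ih]; ring

lemma rot (t r : ℕ) (hr : r < t) {M : Type*} [AddCommMonoid M] (f : ℕ → M) :
    ∑ i ∈ Finset.range t, f ((r + i) % t) = ∑ s ∈ Finset.range t, f s := by
  apply Finset.sum_nbij' (fun i => (r + i) % t) (fun s => (s + (t - r)) % t)
  · intro a ha; exact Finset.mem_range.2 (Nat.mod_lt _ (by omega))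
  · intro a ha; exact Finset.mem_range.2 (Nat.mod_lt _ (by omega))
  · intro a ha
    simp only [Finset.mem_range] at ha
    have h1 : (r + a) % t = if r + a < t then r + a else r + a - t := by
      split
      · exact Nat.mod_eq_of_lt (by omega)
      · rw [Nat.mod_eq_sub_mod (by omega), Nat.mod_eq_of_lt (by omega)]
        try omega
    rw [h1]
    split <;> rename_i h2
    · rw [Nat.mod_eq_sub_mod (by omega), Nat.mod_eq_of_lt (by omega)]
      try omega
    · rw [Nat.mod_eq_of_lt (by omega)]
      try omega
  · intro a ha
    simp only [Finset.mem_range] at ha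
    have h1 : (a + (t - r)) % t = if a + (t-r) < t then a + (t-r) else a + (t-r) - t := by
      split
      · exact Nat.mod_eq_of_lt (by omega)
      · rw [Nat.mod_eq_sub_mod (by omega), Nat.mod_eq_of_lt (by omega)]
        try omega
    rw [h1]
    split <;> rename_i h2
    · rw [Nat.mod_eq_sub_mod (by omega), Nat.mod_eq_of_lt (by omega)]
      try omega
    · rw [Nat.mod_eq_of_lt (by omega)]
      try omega
  · intro a ha; rfl

lemma coneC_backward (t : ℕ) (ht : 1 ≤ t) (x : Fin (t+1) → ℝ)
    (hmono : ∀ i j : Fin (t + 1), i ≤ j → (j : ℕ) < t → x j ≤ x i)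
    (hnn : ∀ i : Fin (t + 1), (i : ℕ) < t → 0 ≤ x i)
    (hlast : 0 ≤ x (Fin.last t))
    (hray : ¬((∀ i : Fin (t + 1), (i : ℕ) < t → x i = 0) ∧ 0 ≤ x (Fin.last t))) :
    ∃ m, 1 ≤ m ∧ x ∈ coneC t m := by
  classical
  -- x 0 > 0
  have hx0 : 0 < x 0 := by
    have h1 : ¬ (∀ i : Fin (t + 1), (i : ℕ) < t → x i = 0) := fun h => hray ⟨h, hlast⟩
    push_neg at h1
    obtain ⟨i, hit, hine⟩ := h1
    have h2 : x i ≤ x 0 := hmono 0 i (Fin.zero_le i) hit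
    have h3 : 0 ≤ x i := hnn i hit
    have : 0 < x i := lt_of_le_of_ne h3 (Ne.symm hine)
    linarith
  set X : ℕ → ℝ := fun s => if h : s < t then x ⟨s, by omega⟩ else 0 with hXdef
  have hX0 : X 0 = x 0 := by
    simp only [hXdef, dif_pos (by omega : (0:ℕ) < t)]
    congr 1
  have hXt : ∀ s, t ≤ s → X s = 0 := by
    intro s hs; simp only [hXdef, dif_neg (by omega : ¬ s < t)]
  have hXnn : ∀ s, 0 ≤ X s := by
    intro s
    simp only [hXdef]
    split
    · exact hnn _ (by assumption)
    · exact le_rfl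
  have hXanti : ∀ s s', s ≤ s' → X s' ≤ X s := by
    intro s s' hss
    by_cases h2 : s' < t
    · have h1 : s < t := by omega
      simp only [hXdef, dif_pos h1, dif_pos h2]
      exact hmono ⟨s, by omega⟩ ⟨s', by omega⟩ (by simp [Fin.le_def]; omega) (by simpa)
    · rw [hXt s' (by omega)]
      exact hXnn s
  set y : ℝ := x (Fin.last t) / t with hydef
  have hy : 0 ≤ y := div_nonneg hlast (by positivity)
  have hty : (t:ℝ) * y = x (Fin.last t) := by
    rw [hydef]; field_simp
  set q : ℕ := ⌊y / x 0⌋₊ with hqdef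
  have hq1 : (q:ℝ) * x 0 ≤ y := by
    rw [hqdef]
    have := Nat.floor_le (div_nonneg hy hx0.le)
    calc (⌊y / x 0⌋₊ : ℝ) * x 0 ≤ (y / x 0) * x 0 := by nlinarith
    _ = y := by field_simp
  have hq2 : y < ((q:ℝ) + 1) * x 0 := by
    have := Nat.lt_floor_add_one (y / x 0)
    calc y = (y / x 0) * x 0 := by field_simp
    _ < ((q:ℝ) + 1) * x 0 := by rw [hqdef]; nlinarith
  set P : ℕ → Prop := fun s => ((q:ℝ) + 1) * x 0 ≤ y + X s with hPdef
  have hP0 : P 0 := by rw [hPdef]; simp only [hX0]; linarith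
  set r : ℕ := Nat.findGreatest P (t-1) with hrdef
  have hrt : r < t := by
    have := Nat.findGreatest_le (P := P) (t-1)
    omega
  have hPr : ((q:ℝ) + 1) * x 0 ≤ y + X r :=
    Nat.findGreatest_spec (Nat.zero_le _) hP0
  have hPr1 : y + X (r+1) < ((q:ℝ) + 1) * x 0 := by
    by_cases hc : r + 1 ≤ t - 1
    · have h1 : ¬ P (r+1) := Nat.findGreatest_is_greatest (Nat.lt_succ_self r) hc
      rw [hPdef] at h1
      
      exact not_le.mp h1
    · rw [hXt (r+1) (by omega)]
      linarith
  set b : ℝ := y + X r - ((q:ℝ) + 1) * x 0 with hbdef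
  set a : ℝ := ((q:ℝ) + 1) * x 0 - y - X (r+1) with hadef
  have hb : 0 ≤ b := by rw [hbdef]; linarith
  have ha : 0 < a := by rw [hadef]; linarith
  have hab : a + b = X r - X (r+1) := by rw [hadef, hbdef]; ring
  set m : ℕ := q * t + r + 1 with hmdef
  set α' : ℕ → ℝ := fun i =>
    if i = 0 then a else if i = t then b else X ((r + i) % t) - X ((r + i) % t + 1) with hα'def
  set α'' : ℕ → ℝ := fun s => if s = r then a else X s - X (s+1) with hα''def
  set G' : ℕ → (Fin (t + 1) → ℝ) := fun s j =>
    if (j:ℕ) = t then (((q + if s < r then 1 else 0) * t : ℕ) : ℝ)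
    else if (j:ℕ) ≤ s then 1 else 0 with hG'def
  have hmodval : ∀ i, i < t → (r + i) % t = if r + i < t then r + i else r + i - t := by
    intro i hi
    split
    · exact Nat.mod_eq_of_lt (by omega)
    · rw [Nat.mod_eq_sub_mod (by omega), Nat.mod_eq_of_lt (by omega)]
  -- geneV in terms of G'
  have hG : ∀ i, i < t → geneV t (m + i) = G' ((r + i) % t) := by
    intro i hi
    funext j
    have h1 : m + i - 1 = q * t + r + i := by omega
    have hmv := hmodval i hi
    unfold geneV
    rw [hG'def, h1]
    by_cases hc : r + i < t
    · have hd : (q * t + r + i) / t = q := by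
        have he : q * t + r + i = t * q + (r + i) := by ring
        rw [he, Nat.mul_add_div (show 0 < t by omega), Nat.div_eq_of_lt (show r + i < t by omega)]
        omega
      have hm2 : (q * t + r + i) % t = r + i := by
        have he : q * t + r + i = t * q + (r + i) := by ring
        rw [he, Nat.mul_add_mod, Nat.mod_eq_of_lt (show r + i < t by omega)]
      have h3 : (q + if r + i < r then 1 else 0) * t = q * t := by
        rw [if_neg (show ¬ r + i < r by omega)]
        ring
      rw [hd, hm2, hmv, if_pos hc]
      simp only
      rw [h3]
    · have he : q * t + r + i = t * (q + 1) + (r + i - t) := by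
        have h5 : q * t + r + i = q * t + t + (r + i - t) := by omega
        rw [h5]; ring
      have hd : (q * t + r + i) / t = q + 1 := by
        rw [he, Nat.mul_add_div (show 0 < t by omega), Nat.div_eq_of_lt (show r + i - t < t by omega)]
        try omega
      have hm2 : (q * t + r + i) % t = r + i - t := by
        rw [he, Nat.mul_add_mod, Nat.mod_eq_of_lt (show r + i - t < t by omega)]
      have h3 : (q + if r + i - t < r then 1 else 0) * t = (q + 1) * t := by
        rw [if_pos (by omega)]
      rw [hd, hm2, hmv, if_neg hc]
      simp only
      rw [h3]
  have hGt : geneV t (m + t) = fun j : Fin (t+1) =>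
      if (j:ℕ) = t then (((q+1) * t : ℕ) : ℝ) else if (j:ℕ) ≤ r then 1 else 0 := by
    funext j
    have h1 : m + t - 1 = t * (q + 1) + r := by
      have h5 : m + t - 1 = q * t + t + r := by omega
      rw [h5]; ring
    unfold geneV
    rw [h1, Nat.mul_add_div (show 0 < t by omega), Nat.div_eq_of_lt (show r < t by omega),
      Nat.mul_add_mod, Nat.mod_eq_of_lt (show r < t by omega)]
    try norm_num
  have hαeq : ∀ i, i < t → α' i = α'' ((r + i) % t) := by
    intro i hi
    have hmv := hmodval i hi
    rw [hα'def, hα''def]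
    by_cases h0 : i = 0
    · subst h0
      have hr0 : (r + 0) % t = r := by
        rw [Nat.add_zero]; exact Nat.mod_eq_of_lt hrt
      simp [hr0, Nat.mod_eq_of_lt hrt]
    · have hne : (r + i) % t ≠ r := by rw [hmv]; split <;> omega
      simp only
      rw [if_neg h0, if_neg (by omega : i ≠ t), if_neg hne]
  refine ⟨m, by omega, (fun i : Fin (t+1) => α' (i:ℕ)), ?_, ?_, ?_⟩
  · show 0 < α' ((0 : Fin (t+1)) : ℕ)
    have h0 : ((0 : Fin (t+1)) : ℕ) = 0 := rfl
    rw [h0, hα'def]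
    simpa using ha
  · intro i
    show 0 ≤ α' ((i : Fin (t+1)) : ℕ)
    rw [hα'def]
    simp only
    split
    · exact ha.le
    split
    · exact hb
    · have := hXanti ((r + (i:ℕ)) % t) ((r + (i:ℕ)) % t + 1) (Nat.le_succ _)
      linarith
  -- the main equality
  have hsum1 : ∑ i : Fin (t+1), α' (i:ℕ) • geneV t (m + (i:ℕ))
      = ∑ i ∈ Finset.range (t+1), α' i • geneV t (m + i) :=
    Fin.sum_univ_eq_sum_range (fun k => α' k • geneV t (m + k)) (t+1)
  have ht0 : ¬ t = 0 := by omega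
  have hb2 : α' t = b := by simp [hα'def, ht0]
  have hαr : α'' r = a := by simp [hα''def]
  have h5 : ∀ s ∈ Finset.Ico (r+1) t, α'' s = X s - X (s+1) := by
    intro s hs
    rw [Finset.mem_Ico] at hs
    simp only [hα''def]
    rw [if_neg (show ¬ s = r by omega)]
  have h7 : ∑ s ∈ Finset.Ico r t, α'' s = a + (X (r+1) - X t) := by
    rw [Finset.sum_eq_sum_Ico_succ_bot hrt, Finset.sum_congr rfl h5,
      telesc X (r+1) t hrt, hαr]
  have hsum : ∑ i : Fin (t+1), α' (i:ℕ) • geneV t (m + (i:ℕ))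
      = (∑ s ∈ Finset.range t, α'' s • G' s) + b • geneV t (m + t) := by
    rw [hsum1, Finset.sum_range_succ]
    congr 1
    · rw [← rot t r hrt (fun s => α'' s • G' s)]
      apply Finset.sum_congr rfl
      intro i hi
      rw [Finset.mem_range] at hi
      rw [hαeq i hi, hG i hi]
    · rw [hb2]
  show x = ∑ i : Fin (t+1), α' (i:ℕ) • geneV t (m + (i:ℕ))
  rw [hsum]
  funext j
  have hjle : (j:ℕ) ≤ t := by omega
  simp only [Pi.add_apply, Finset.sum_apply, Pi.smul_apply, smul_eq_mul, hGt]
  by_cases hjt : (j:ℕ) = t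
  · -- last coordinate
    have hj : j = Fin.last t := Fin.ext hjt
    have h2 : ∑ s ∈ Finset.range t, α'' s * G' s j
        = (∑ s ∈ Finset.Ico 0 r, (X s - X (s+1)) * (((q:ℝ)+1) * t))
          + ∑ s ∈ Finset.Ico r t, α'' s * ((q:ℝ) * t) := by
      rw [Finset.range_eq_Ico, ← Finset.sum_Ico_consecutive _ (Nat.zero_le r) hrt.le]
      congr 1
      · apply Finset.sum_congr rfl
        intro s hs
        rw [Finset.mem_Ico] at hs
        simp only [hα''def, hG'def]
        rw [if_neg (show ¬ s = r by omega), if_pos hjt, if_pos hs.2]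
        push_cast
        ring
      · apply Finset.sum_congr rfl
        intro s hs
        rw [Finset.mem_Ico] at hs
        simp only [hG'def]
        rw [if_pos hjt, if_neg (show ¬ s < r by omega)]
        push_cast
        ring
    have h3 : ∑ s ∈ Finset.Ico 0 r, (X s - X (s+1)) * (((q:ℝ)+1) * t)
        = (X 0 - X r) * (((q:ℝ)+1) * t) := by
      rw [← Finset.sum_mul, telesc X 0 r (Nat.zero_le r)]
    have h4 : ∑ s ∈ Finset.Ico r t, α'' s * ((q:ℝ) * t)
        = (a + (X (r+1) - X t)) * ((q:ℝ) * t) := by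
      rw [← Finset.sum_mul, h7]
    rw [h2, h3, h4, if_pos hjt, hj, ← hty]
    rw [hXt t le_rfl, hadef, hbdef, hX0]
    push_cast
    ring
  · -- coordinate j < t
    have hjlt : (j:ℕ) < t := by omega
    have hxj : x j = X (j:ℕ) := by
      simp only [hXdef, dif_pos hjlt]
      try (congr 1; exact (Fin.eta j _).symm)
    have h2 : ∑ s ∈ Finset.range t, α'' s * G' s j = ∑ s ∈ Finset.Ico (j:ℕ) t, α'' s := by
      rw [Finset.range_eq_Ico, ← Finset.sum_Ico_consecutive _ (Nat.zero_le (j:ℕ)) hjlt.le]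
      have hz : ∑ s ∈ Finset.Ico 0 (j:ℕ), α'' s * G' s j = 0 := by
        apply Finset.sum_eq_zero
        intro s hs
        rw [Finset.mem_Ico] at hs
        simp only [hG'def]
        rw [if_neg hjt, if_neg (show ¬ (j:ℕ) ≤ s by omega)]
        ring
      rw [hz, zero_add]
      apply Finset.sum_congr rfl
      intro s hs
      rw [Finset.mem_Ico] at hs
      simp only [hG'def]
      rw [if_neg hjt, if_pos hs.1, mul_one]
    rw [h2, if_neg hjt, hxj]
    by_cases hJr : (j:ℕ) ≤ r
    · rw [if_pos hJr, ← Finset.sum_Ico_consecutive _ hJr hrt.le]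
      have h6 : ∀ s ∈ Finset.Ico (j:ℕ) r, α'' s = X s - X (s+1) := by
        intro s hs
        rw [Finset.mem_Ico] at hs
        simp only [hα''def]
        rw [if_neg (show ¬ s = r by omega)]
      rw [Finset.sum_congr rfl h6, telesc X (j:ℕ) r hJr, h7, hXt t le_rfl]
      linarith [hab]
    · rw [if_neg hJr]
      have h8 : ∀ s ∈ Finset.Ico (j:ℕ) t, α'' s = X s - X (s+1) := by
        intro s hs
        rw [Finset.mem_Ico] at hs
        simp only [hα''def]
        rw [if_neg (show ¬ s = r by omega)]
      rw [Finset.sum_congr rfl h8, telesc X (j:ℕ) t hjlt.le, hXt t le_rfl]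
      ring


/-- The cones `C_m` tile the simplicial cone `{x : x₀ ≥ … ≥ x_{t-1} ≥ 0, x_t ≥ 0}` with
the extreme ray along the last coordinate axis removed. -/
theorem union_of_cones_eq_simplicial_cone_minus_ray (t : ℕ) (ht : 1 ≤ t) :
    (⋃ m ∈ { m : ℕ | 1 ≤ m }, coneC t m)
      = { x : Fin (t + 1) → ℝ |
            (∀ i j : Fin (t + 1), i ≤ j → (j : ℕ) < t → x j ≤ x i) ∧
            (∀ i : Fin (t + 1), (i : ℕ) < t → 0 ≤ x i) ∧
            0 ≤ x (Fin.last t) }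
        \ { x : Fin (t + 1) → ℝ |
            (∀ i : Fin (t + 1), (i : ℕ) < t → x i = 0) ∧ 0 ≤ x (Fin.last t) } := by
  ext x
  constructor
  · intro hx
    rw [Set.mem_iUnion₂] at hx
    obtain ⟨m, hm, hxm⟩ := hx
    exact coneC_forward t ht m hm x hxm
  · intro hx
    obtain ⟨⟨hmono, hnn, hlast⟩, hray⟩ := hx
    obtain ⟨m, hm, hmem⟩ := coneC_backward t ht x hmono hnn hlast hray
    exact Set.mem_iUnion₂.2 ⟨m, hm, hmem⟩
end

section
/- Fix an integer t ≥ 1. For every integer m ≥ 1, the set of all integer linear combinations of v_m, v_{m+1}, …, v_{m+t} (i.e., the subgroup of ℤ^{t+1} generated by these vectors) equals the lattice Λ := { z ∈ ℤ^{t+1} : t divides z_t } = ℤ^t × tℤ; in particular this lattice is the same for every m. -/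
def geneVZ (t : ℕ) (i : ℕ) : Fin (t + 1) → ℤ := fun l =>
  if (l : ℕ) = t then (((i - 1) / t) * t : ℕ)
  else if (l : ℕ) ≤ (i - 1) % t then 1 else 0

private lemma w_mem (t : ℕ) (ht : 1 ≤ t) (m : ℕ) (hm : 1 ≤ m) :
    (fun l : Fin (t+1) => if (l : ℕ) = t then (t : ℤ) else 0) ∈
      Submodule.span ℤ (Set.range fun i : Fin (t + 1) => geneVZ t (m + (i : ℕ))) := by
  have key : (fun l : Fin (t+1) => if (l : ℕ) = t then (t : ℤ) else 0)
      = geneVZ t (m + ((Fin.last t : Fin (t+1)) : ℕ)) - geneVZ t (m + ((0 : Fin (t+1)) : ℕ)) := by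
    funext l
    simp only [geneVZ, Fin.val_last, Fin.val_zero, Nat.add_zero, Pi.sub_apply]
    have h1 : m + t - 1 = (m - 1) + t := by omega
    rw [h1]
    by_cases hl : (l : ℕ) = t
    · rw [if_pos hl, if_pos hl, if_pos hl, Nat.add_div_right _ (by omega)]
      push_cast; ring
    · rw [if_neg hl, if_neg hl, if_neg hl, Nat.add_mod_right]
      ring
  rw [key]
  exact sub_mem (Submodule.subset_span ⟨Fin.last t, rfl⟩) (Submodule.subset_span ⟨0, rfl⟩)

private lemma u_mem (t : ℕ) (ht : 1 ≤ t) (m : ℕ) (hm : 1 ≤ m) (r : ℕ) (hr : r < t) :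
    (fun l : Fin (t+1) => if (l : ℕ) = t then 0 else if (l : ℕ) ≤ r then (1:ℤ) else 0) ∈
      Submodule.span ℤ (Set.range fun i : Fin (t + 1) => geneVZ t (m + (i : ℕ))) := by
  have hat : (m - 1) % t < t := Nat.mod_lt _ (by omega)
  set k := (r + t - (m - 1) % t) % t with hk
  have hkt : k < t := Nat.mod_lt _ (by omega)
  have hres : (m - 1 + k) % t = r := by
    have h1 : (m - 1 + k) % t = ((m - 1) % t + k % t) % t := Nat.add_mod _ _ _
    have h2 : k % t = k := Nat.mod_eq_of_lt hkt
    have h4 : ((m - 1) % t + (r + t - (m - 1) % t) % t) % t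
        = ((m - 1) % t + (r + t - (m - 1) % t)) % t :=
      Nat.ModEq.add_left ((m - 1) % t) (Nat.mod_modEq (r + t - (m - 1) % t) t)
    have h5 : (m - 1) % t + (r + t - (m - 1) % t) = r + t := by omega
    rw [h1, h2, hk, h4, h5, Nat.add_mod_right, Nat.mod_eq_of_lt hr]
  set d : ℤ := (((m - 1 + k) / t : ℕ) : ℤ) with hd
  have key : (fun l : Fin (t+1) => if (l : ℕ) = t then 0 else if (l : ℕ) ≤ r then (1:ℤ) else 0)
      = geneVZ t (m + ((⟨k, by omega⟩ : Fin (t+1)) : ℕ))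
        - d • (fun l : Fin (t+1) => if (l : ℕ) = t then (t : ℤ) else 0) := by
    funext l
    simp only [geneVZ, Pi.sub_apply, Pi.smul_apply, smul_eq_mul]
    have h1 : m + k - 1 = m - 1 + k := by omega
    rw [h1]
    by_cases hl : (l : ℕ) = t
    · rw [if_pos hl, if_pos hl, if_pos hl, hd]
      push_cast; ring
    · rw [if_neg hl, if_neg hl, if_neg hl, hres, mul_zero, sub_zero]
  rw [key]
  exact sub_mem (Submodule.subset_span ⟨⟨k, by omega⟩, rfl⟩)
    (Submodule.smul_mem _ _ (w_mem t ht m hm))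

private lemma e_mem (t : ℕ) (ht : 1 ≤ t) (m : ℕ) (hm : 1 ≤ m) (r : ℕ) (hr : r < t) :
    (fun l : Fin (t+1) => if (l : ℕ) = r then (1:ℤ) else 0) ∈
      Submodule.span ℤ (Set.range fun i : Fin (t + 1) => geneVZ t (m + (i : ℕ))) := by
  match r with
  | 0 =>
    have key : (fun l : Fin (t+1) => if (l : ℕ) = 0 then (1:ℤ) else 0)
        = (fun l : Fin (t+1) => if (l : ℕ) = t then 0 else if (l : ℕ) ≤ 0 then (1:ℤ) else 0) := by
      funext l
      by_cases hl : (l : ℕ) = t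
      · rw [if_pos hl, if_neg (by omega)]
      · rw [if_neg hl]
        by_cases h0 : (l : ℕ) = 0
        · rw [if_pos h0, if_pos (by omega)]
        · rw [if_neg h0, if_neg (by omega)]
    rw [key]; exact u_mem t ht m hm 0 hr
  | (r+1) =>
    have key : (fun l : Fin (t+1) => if (l : ℕ) = r + 1 then (1:ℤ) else 0)
        = (fun l : Fin (t+1) => if (l : ℕ) = t then 0 else if (l : ℕ) ≤ r + 1 then (1:ℤ) else 0)
          - (fun l : Fin (t+1) => if (l : ℕ) = t then 0 else if (l : ℕ) ≤ r then (1:ℤ) else 0) := by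
      funext l
      simp only [Pi.sub_apply]
      by_cases hl : (l : ℕ) = t
      · rw [if_pos hl, if_pos hl, if_neg (by omega), sub_zero]
      · rw [if_neg hl, if_neg hl]
        by_cases h1 : (l : ℕ) = r + 1
        · rw [if_pos h1, if_pos (by omega), if_neg (by omega), sub_zero]
        · rw [if_neg h1]
          by_cases h2 : (l : ℕ) ≤ r
          · rw [if_pos (by omega), if_pos h2, sub_self]
          · rw [if_neg (by omega), if_neg h2, sub_self]
    rw [key]
    exact sub_mem (u_mem t ht m hm (r+1) hr) (u_mem t ht m hm r (by omega))

/-- For every `m ≥ 1`, the set of integer linear combinations of `v_m, …, v_{m+t}`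
equals the lattice `Λ = ℤ^t × tℤ = {z ∈ ℤ^{t+1} : t ∣ z_t}`. -/
theorem lattice_generated_by_cone_generators (t : ℕ) (ht : 1 ≤ t) (m : ℕ) (hm : 1 ≤ m) :
    (Submodule.span ℤ (Set.range fun i : Fin (t + 1) => geneVZ t (m + (i : ℕ)))
        : Set (Fin (t + 1) → ℤ))
      = { z : Fin (t + 1) → ℤ | (t : ℤ) ∣ z (Fin.last t) } := by
  apply Set.Subset.antisymm
  · intro z hz
    induction hz using Submodule.span_induction with
    | mem x hx =>
      obtain ⟨i, rfl⟩ := hx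
      show (t : ℤ) ∣ geneVZ t (m + (i : ℕ)) (Fin.last t)
      simp only [geneVZ, Fin.val_last, if_pos rfl]
      exact ⟨((m + (i:ℕ) - 1) / t : ℕ), by push_cast; ring⟩
    | zero => simp
    | add x y _ _ hx hy => exact dvd_add hx hy
    | smul c x _ hx => exact Dvd.dvd.mul_left hx c
  · intro z hz
    obtain ⟨c, hc⟩ := hz
    have key : z = ∑ i : Fin (t+1), (if (i : ℕ) = t then c else z i) •
        (fun l : Fin (t+1) => if (i : ℕ) = t then (if (l : ℕ) = t then (t : ℤ) else 0)
          else (if (l : ℕ) = (i : ℕ) then 1 else 0)) := by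
      funext l
      rw [Finset.sum_apply]
      simp only [Pi.smul_apply, smul_eq_mul]
      rw [Finset.sum_eq_single l]
      · by_cases hl : (l : ℕ) = t
        · rw [if_pos hl, if_pos hl, if_pos hl]
          have : l = Fin.last t := by ext; simpa using hl
          rw [this, hc]; ring
        · rw [if_neg hl, if_neg hl, if_pos rfl, mul_one]
      · intro i _ hil
        by_cases hi : (i : ℕ) = t
        · rw [if_pos hi, if_pos hi]
          have hl : ¬ ((l : ℕ) = t) := fun h => hil (by ext; omega)
          rw [if_neg hl, mul_zero]
        · rw [if_neg hi, if_neg hi]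
          have hl : ¬ ((l : ℕ) = (i : ℕ)) := fun h => hil (Fin.ext h).symm
          rw [if_neg hl, mul_zero]
      · intro h; exact absurd (Finset.mem_univ l) h
    rw [key]
    refine Submodule.sum_mem _ fun i _ => Submodule.smul_mem _ _ ?_
    by_cases hi : (i : ℕ) = t
    · simp only [hi, if_pos rfl]
      exact w_mem t ht m hm
    · simp only [hi, if_neg hi]
      exact e_mem t ht m hm (i : ℕ) (by omega)
end
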